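/- arXiv:1605.05354 — 8 statements merged into one kernel-verified Lean document; each statement's English description precedes it below -/
import Mathlib

section
/- If a subshift X over a finite alphabet has the specification property with gap constant τ, then X has left almost specification with constant mistake function g ≡ τ: for any words w¹, w² in the language of X, there exists a word w̄¹ with |w̄¹| = |w¹|, Hamming distance d_H(w̄¹, w¹) ≤ τ, and w̄¹w² in the language of X. -/
open Real Filter MeasureTheory

/-- The left shift map on bi-infinite sequences. -/
def shiftMap {A : Type*} (x : ℤ → A) : ℤ → A := fun i => x (i + 1)

/-- The word of length `n` read from `x` starting at position `i`. -/
def wordAt {A : Type*} (x : ℤ → A) (i : ℤ) (n : ℕ) : List A :=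
  List.ofFn (fun k : Fin n => x (i + (k : ℕ)))

/-- A word `w` belongs to the language of a set `S` of bi-infinite sequences if it
occurs somewhere in some point of `S`. -/
def InLangS {A : Type*} (S : Set (ℤ → A)) (w : List A) : Prop :=
  ∃ x ∈ S, ∃ i : ℤ, wordAt x i w.length = w

/-- Hamming distance between two words of the same length: the number of
positions at which they differ. -/
def listHamming {A : Type*} [DecidableEq A] (v w : List A) : ℕ :=
  (List.zipWith (fun a b => if a = b then 0 else 1) v w).sum

/-- A subshift: a closed, shift-invariant set of bi-infinite sequences over a
finite (discrete) alphabet. -/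
structure Subshift (A : Type*) [TopologicalSpace A] where
  carrier : Set (ℤ → A)
  isClosed : IsClosed carrier
  invariant : ∀ x ∈ carrier, shiftMap x ∈ carrier

/-- Topological entropy of (the language of) `S`, as the infimum of
`(1/n) log |L_n(S)|` (equal to the limit by subadditivity). -/
noncomputable def langEntropy {A : Type*} (S : Set (ℤ → A)) : ℝ :=
  ⨅ n : ℕ+, Real.log ({w : List A | w.length = (n : ℕ) ∧ InLangS S w}.ncard) / (n : ℝ)

lemma wordAt_drop {A : Type*} (x : ℤ → A) (i : ℤ) (n m : ℕ) :
    (wordAt x i n).drop m = wordAt x (i + m) (n - m) := by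
  apply List.ext_getElem
  · simp [wordAt]
  · intro k h1 h2
    simp [wordAt, List.getElem_drop]
    ring_nf

lemma wordAt_take {A : Type*} (x : ℤ → A) (i : ℤ) (n m : ℕ) :
    (wordAt x i n).take m = wordAt x i (min m n) := by
  apply List.ext_getElem
  · simp [wordAt]
  · intro k h1 h2
    simp [wordAt]

lemma inLang_drop {A : Type*} {S : Set (ℤ → A)} {w : List A} (m : ℕ)
    (h : InLangS S w) : InLangS S (w.drop m) := by
  obtain ⟨x, hx, i, hw⟩ := h
  refine ⟨x, hx, i + m, ?_⟩
  have := wordAt_drop x i w.length m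
  rw [hw] at this
  rw [List.length_drop, ← this]

lemma inLang_take {A : Type*} {S : Set (ℤ → A)} {w : List A} (m : ℕ)
    (h : InLangS S w) : InLangS S (w.take m) := by
  obtain ⟨x, hx, i, hw⟩ := h
  refine ⟨x, hx, i, ?_⟩
  have := wordAt_take x i w.length m
  rw [hw] at this
  rw [List.length_take, ← this]

lemma listHamming_le {A : Type*} [DecidableEq A] (v w : List A) :
    listHamming v w ≤ v.length := by
  induction v generalizing w with
  | nil => simp [listHamming]
  | cons a t ih =>
    cases w with
    | nil => simp [listHamming]
    | cons b s =>
      simp only [listHamming, List.zipWith_cons_cons, List.sum_cons, List.length_cons]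
      have := ih s
      unfold listHamming at this
      split <;> omega

lemma listHamming_append {A : Type*} [DecidableEq A] (v a b : List A) :
    listHamming (v ++ a) (v ++ b) = listHamming a b := by
  unfold listHamming
  rw [List.zipWith_append (rfl : v.length = v.length), List.sum_append]
  have : (List.zipWith (fun a b : A => if a = b then 0 else 1) v v).sum = 0 := by
    induction v with
    | nil => rfl
    | cons h t ih => simp [ih]
  rw [this, Nat.zero_add]

/-- Specification implies left almost specification with constant mistake
function `g ≡ τ`. -/
theorem stmt2 {A : Type*} [Fintype A] [DecidableEq A]
    [TopologicalSpace A] [DiscreteTopology A]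
    (X : Subshift A) (τ : ℕ)
    (hspec : ∀ v w : List A, InLangS X.carrier v → InLangS X.carrier w →
      ∃ u : List A, u.length = τ ∧ InLangS X.carrier u ∧
        InLangS X.carrier (v ++ u ++ w)) :
    ∀ w1 w2 : List A, InLangS X.carrier w1 → InLangS X.carrier w2 →
      ∃ b : List A, b.length = w1.length ∧ listHamming b w1 ≤ τ ∧
        InLangS X.carrier (b ++ w2) := by
  intro w1 w2 h1 h2
  by_cases hτ : τ ≤ w1.length
  · obtain ⟨u, hul, -, hlang⟩ := hspec (w1.take (w1.length - τ)) w2 (inLang_take _ h1) h2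
    have hsplit := List.take_append_drop (w1.length - τ) w1
    refine ⟨w1.take (w1.length - τ) ++ u, ?_, ?_, hlang⟩
    · simp [hul]; omega
    · calc listHamming (w1.take (w1.length - τ) ++ u) w1
          = listHamming (w1.take (w1.length - τ) ++ u)
              (w1.take (w1.length - τ) ++ w1.drop (w1.length - τ)) := by rw [hsplit]
        _ = listHamming u (w1.drop (w1.length - τ)) := listHamming_append _ _ _
        _ ≤ u.length := listHamming_le _ _
        _ = τ := hul
  · push_neg at hτ
    have hempty : InLangS X.carrier ([] : List A) := by
      have := inLang_take 0 h1; simpa using this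
    obtain ⟨u, hul, -, hlang⟩ := hspec [] w2 hempty h2
    simp only [List.nil_append] at hlang
    refine ⟨u.drop (τ - w1.length), ?_, ?_, ?_⟩
    · simp [hul]; omega
    · have := listHamming_le (u.drop (τ - w1.length)) w1
      simp only [List.length_drop, hul] at this
      omega
    · have h3 := inLang_drop (τ - w1.length) hlang
      rwa [List.drop_append_of_le_length (by omega)] at h3
end

section
/- Let X be a subshift with almost specification with constant mistake function g ≡ m over alphabet A. Then for every n ∈ ℕ, the number of words of length n in the language satisfies |L_n(X)| ≤ |A|^{2m} · n^{2m} · e^{n·h(X)}, where h(X) is the topological entropy of X. -/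
open Real Filter MeasureTheory

/- ### Auxiliary lemmas -/

lemma ofFn_getD' {A : Type*} (a0 : A) (l : List A) {n : ℕ} (h : l.length = n) :
    List.ofFn (fun t : Fin n => l.getD t a0) = l := by
  apply List.ext_getElem (by simp [h])
  intro i h1 h2
  simp only [List.getElem_ofFn]
  rw [List.getD_eq_getElem]

lemma ofFn_get' {A : Type*} (l : List A) {n : ℕ} (h : l.length = n) :
    List.ofFn (fun i : Fin n => l.get (Fin.cast h.symm i)) = l := by
  apply List.ext_getElem (by simp [h])
  intro i h1 h2
  simp

lemma zipWith_ofFn' {A B C : Type*} (h : A → B → C) (n : ℕ) (f : Fin n → A) (g : Fin n → B) :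
    List.zipWith h (List.ofFn f) (List.ofFn g) = List.ofFn (fun i => h (f i) (g i)) := by
  induction n with
  | zero => simp
  | succ k ih => simp [List.ofFn_succ, ih]

lemma listHamming_ofFn {A : Type*} [DecidableEq A] (n : ℕ) (f g : Fin n → A) :
    listHamming (List.ofFn f) (List.ofFn g) = hammingDist f g := by
  rw [listHamming, zipWith_ofFn', List.sum_ofFn, hammingDist, Finset.card_filter]
  exact Finset.sum_congr rfl fun i _ => by by_cases h : f i = g i <;> simp [h]

lemma flatten_chunk {A : Type*} (n : ℕ) :
    ∀ (k : ℕ) (bars : Fin k → List A), (∀ i, (bars i).length = n) →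
      ∀ i : Fin k, ((List.ofFn bars).flatten.drop (i * n)).take n = bars i := by
  intro k
  induction k with
  | zero => intro bars _ i; exact i.elim0
  | succ k ih =>
    intro bars hlen i
    rw [List.ofFn_succ, List.flatten_cons]
    induction i using Fin.cases with
    | zero =>
      simp only [Fin.val_zero, Nat.zero_mul, List.drop_zero]
      exact List.take_left' (hlen 0)
    | succ j =>
      have h2 : ((j.succ : Fin (k+1)) : ℕ) * n = (bars 0).length + (j : ℕ) * n := by
        rw [hlen 0]; simp [Fin.val_succ, Nat.succ_mul, Nat.add_comm]
      rw [h2, List.drop_append, List.drop_of_length_le (by omega), List.nil_append,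
        Nat.add_sub_cancel_left]
      exact ih (fun i => bars i.succ) (fun i => hlen i.succ) j

lemma flatten_len {A : Type*} {n k : ℕ} (bars : Fin k → List A) (h : ∀ i, (bars i).length = n) :
    (List.ofFn bars).flatten.length = k * n := by
  rw [List.length_flatten, List.map_ofFn, List.sum_ofFn]
  simp [Function.comp, h, Finset.sum_const, Finset.card_univ]

lemma ncard_lang {A : Type*} [Fintype A] [DecidableEq A] (S : Set (ℤ → A)) (j : ℕ) :
    {w : List A | w.length = j ∧ InLangS S w}.ncard
      = {f : Fin j → A | InLangS S (List.ofFn f)}.ncard := by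
  classical
  have him : {w : List A | w.length = j ∧ InLangS S w}
      = List.ofFn '' {f : Fin j → A | InLangS S (List.ofFn f)} := by
    ext w
    constructor
    · rintro ⟨hlen, hmem⟩
      exact ⟨fun i => w.get (Fin.cast hlen.symm i),
        by rw [Set.mem_setOf_eq, ofFn_get' w hlen]; exact hmem, ofFn_get' w hlen⟩
    · rintro ⟨f, hf, rfl⟩
      exact ⟨by simp, hf⟩
  rw [him, Set.ncard_image_of_injective _ List.ofFn_injective]

lemma ball_card {A : Type*} [Fintype A] [DecidableEq A] {n : ℕ} (hn : 0 < n) (r : ℕ)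
    (s : Fin n → A) :
    (Finset.univ.filter fun w : Fin n → A => hammingDist w s ≤ r).card
      ≤ (n * Fintype.card A) ^ r := by
  classical
  set i0 : Fin n := ⟨0, hn⟩ with hi0
  set lst : (Fin n → A) → List (Fin n) :=
    fun w => (Finset.univ.filter (fun i => w i ≠ s i)).sort (· ≤ ·) with hlst
  set φ : (Fin n → A) → (Fin r → Fin n × A) := fun w k =>
    ((lst w).getD k i0, w ((lst w).getD k i0)) with hφ
  have hcard : ∀ w : Fin n → A, (lst w).length = hammingDist w s := by
    intro w
    rw [hlst]
    simp only [Finset.length_sort]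
    rfl
  have key : ∀ w : Fin n → A, hammingDist w s ≤ r → ∀ i, w i ≠ s i →
      ∃ k : Fin r, ((lst w).getD k i0) = i := by
    intro w hw i hi
    have hmem : i ∈ lst w := by rw [hlst]; simp [Finset.mem_sort, hi]
    obtain ⟨k, hk⟩ := List.get_of_mem hmem
    have hlen : (lst w).length ≤ r := by rw [hcard]; exact hw
    refine ⟨⟨k, lt_of_lt_of_le k.isLt hlen⟩, ?_⟩
    rw [List.getD_eq_getElem _ _ k.isLt]
    simpa using hk
  calc (Finset.univ.filter fun w : Fin n → A => hammingDist w s ≤ r).card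
      ≤ (Finset.univ : Finset (Fin r → Fin n × A)).card := by
        apply Finset.card_le_card_of_injOn φ (fun w _ => Finset.mem_univ _)
        intro w hw w' hw' heq
        simp only [Finset.coe_filter, Set.mem_setOf_eq, Finset.mem_univ, true_and] at hw hw'
        funext x
        by_cases h1 : w x = s x
        · by_cases h2 : w' x = s x
          · rw [h1, h2]
          · obtain ⟨k, hk⟩ := key w' hw' x h2
            have e2 : φ w' k = (x, w' x) := by simp only [hφ]; rw [hk]
            have e1 : φ w k = (x, w' x) := by rw [heq]; exact e2
            have hfst := congrArg Prod.fst e1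
            have hsnd := congrArg Prod.snd e1
            simp only [hφ] at hfst hsnd
            rw [hfst] at hsnd
            exact hsnd
        · obtain ⟨k, hk⟩ := key w hw x h1
          have e1 : φ w k = (x, w x) := by simp only [hφ]; rw [hk]
          have e2 : φ w' k = (x, w x) := by rw [← heq]; exact e1
          have hfst := congrArg Prod.fst e2
          have hsnd := congrArg Prod.snd e2
          simp only [hφ] at hfst hsnd
          rw [hfst] at hsnd
          exact hsnd.symm
    _ = (n * Fintype.card A) ^ r := by
        simp [Finset.card_univ, Fintype.card_fun, Fintype.card_prod]

lemma exists_sep_set {A : Type*} [Fintype A] [DecidableEq A] {n : ℕ} (r : ℕ)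
    (F : Finset (Fin n → A)) :
    ∃ S : Finset (Fin n → A), S ⊆ F ∧
      (∀ a ∈ S, ∀ b ∈ S, a ≠ b → r + 1 ≤ hammingDist a b) ∧
      (∀ w ∈ F, ∃ s ∈ S, hammingDist w s ≤ r) := by
  classical
  set fam := F.powerset.filter
    (fun T => ∀ a ∈ T, ∀ b ∈ T, a ≠ b → r + 1 ≤ hammingDist a b) with hfam
  have hne : fam.Nonempty := ⟨∅, by simp [hfam]⟩
  obtain ⟨S, hSmem, hmax⟩ := fam.exists_maximal hne
  rw [hfam, Finset.mem_filter, Finset.mem_powerset] at hSmem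
  refine ⟨S, hSmem.1, hSmem.2, ?_⟩
  intro w hw
  by_contra hcon
  push_neg at hcon
  have hwS : w ∉ S := by
    intro hmem
    have h1 := hcon w hmem
    simp [hammingDist_self] at h1
  refine absurd (hmax (y := insert w S) (?_ : insert w S ∈ fam) (Finset.subset_insert w S))
    (fun h => hwS (h (Finset.mem_insert_self w S)))
  rw [hfam, Finset.mem_filter, Finset.mem_powerset]
  refine ⟨Finset.insert_subset hw hSmem.1, ?_⟩
  intro a ha b hb hab
  rcases Finset.mem_insert.mp ha with ha' | ha' <;> rcases Finset.mem_insert.mp hb with hb' | hb'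
  · exact absurd (ha'.trans hb'.symm) hab
  · subst ha'; exact Nat.succ_le_of_lt (hcon b hb')
  · subst hb'; rw [hammingDist_comm]; exact Nat.succ_le_of_lt (hcon a ha')
  · exact hSmem.2 a ha' b hb' hab

/-- If `X` has almost specification with constant mistake function `g ≡ m`, then
`|L_n(X)| ≤ |A|^{2m} · n^{2m} · e^{n·h(X)}` for every `n ≥ 1`. -/
theorem stmt5 {A : Type*} [Fintype A] [DecidableEq A]
    [TopologicalSpace A] [DiscreteTopology A]
    (X : Subshift A) (m : ℕ)
    (hAS : ∀ (k : ℕ) (ws : Fin k → List A), (∀ i, InLangS X.carrier (ws i)) →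
      ∃ bars : Fin k → List A,
        (∀ i, (bars i).length = (ws i).length ∧ listHamming (bars i) (ws i) ≤ m ∧
          InLangS X.carrier (bars i)) ∧
        InLangS X.carrier (List.ofFn bars).flatten) :
    ∀ n : ℕ, 1 ≤ n →
      (({w : List A | w.length = n ∧ InLangS X.carrier w}.ncard : ℝ)) ≤
        (Fintype.card A : ℝ) ^ (2 * m) * (n : ℝ) ^ (2 * m) *
          Real.exp ((n : ℝ) * langEntropy X.carrier) := by
  classical
  intro n hn
  set F : (j : ℕ) → Finset (Fin j → A) :=
    fun j => Finset.univ.filter (fun f : Fin j → A => InLangS X.carrier (List.ofFn f)) with hF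
  have hncard : ∀ j : ℕ,
      {w : List A | w.length = j ∧ InLangS X.carrier w}.ncard = (F j).card := by
    intro j
    rw [ncard_lang]
    have heq2 : {f : Fin j → A | InLangS X.carrier (List.ofFn f)}.ncard
        = (Finset.univ.filter (fun f : Fin j → A => InLangS X.carrier (List.ofFn f))).card := by
      rw [← Set.toFinset_setOf]
      exact Set.ncard_eq_toFinset_card' _
    rw [heq2, hF]
  rw [hncard n]
  rcases Nat.eq_zero_or_pos (F n).card with h0 | hpos
  · rw [h0]; push_cast; positivity
  have hn0 : 0 < n := hn
  obtain ⟨f0, hf0mem⟩ := Finset.card_pos.mp hpos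
  have hf0 : InLangS X.carrier (List.ofFn f0) := by
    have := Finset.mem_filter.mp hf0mem
    exact this.2
  obtain ⟨x0, hx0, -⟩ := hf0
  have a0 : A := x0 0
  -- separated set
  obtain ⟨S, hSsub, hSsep, hScov⟩ := exists_sep_set (2 * m) (F n)
  have hS1 : 0 < S.card := by
    obtain ⟨s, hs, -⟩ := hScov f0 hf0mem
    exact Finset.card_pos.mpr ⟨s, hs⟩
  -- covering bound
  have hFS : (F n).card ≤ S.card * (n * Fintype.card A) ^ (2 * m) := by
    have hsub : F n ⊆ S.biUnion
        (fun s => Finset.univ.filter (fun w : Fin n → A => hammingDist w s ≤ 2 * m)) := by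
      intro w hw
      obtain ⟨s, hs, hds⟩ := hScov w hw
      exact Finset.mem_biUnion.mpr ⟨s, hs, by simp [hds]⟩
    calc (F n).card ≤ _ := Finset.card_le_card hsub
      _ ≤ ∑ s ∈ S, (Finset.univ.filter
            (fun w : Fin n → A => hammingDist w s ≤ 2 * m)).card := Finset.card_biUnion_le
      _ ≤ ∑ _s ∈ S, (n * Fintype.card A) ^ (2 * m) :=
        Finset.sum_le_sum (fun s _ => ball_card hn0 (2 * m) s)
      _ = S.card * (n * Fintype.card A) ^ (2 * m) := by
        rw [Finset.sum_const, smul_eq_mul]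
  -- gluing
  have hglue : ∀ N : ℕ, S.card ^ N ≤ (F (N * n)).card := by
    intro N
    have key : ∀ σ : Fin N → Fin n → A, (∀ i, σ i ∈ S) →
        ∃ bars : Fin N → List A,
          (∀ i, (bars i).length = n ∧ listHamming (bars i) (List.ofFn (σ i)) ≤ m) ∧
          InLangS X.carrier (List.ofFn bars).flatten := by
      intro σ hσ
      have hin : ∀ i, InLangS X.carrier (List.ofFn (σ i)) := fun i =>
        (Finset.mem_filter.mp (hSsub (hσ i))).2
      obtain ⟨bars, h1, h2⟩ := hAS N (fun i => List.ofFn (σ i)) hin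
      exact ⟨bars, fun i => ⟨((h1 i).1).trans (by simp), (h1 i).2.1⟩, h2⟩
    set φg : (Fin N → Fin n → A) → (Fin (N * n) → A) := fun σ =>
      if h : ∀ i, σ i ∈ S then
        fun t => ((List.ofFn (key σ h).choose).flatten).getD t a0
      else fun _ => a0 with hφg
    have hmain : ∀ (σ : Fin N → Fin n → A) (h : ∀ i, σ i ∈ S),
        List.ofFn (φg σ) = (List.ofFn (key σ h).choose).flatten := by
      intro σ h
      have hlen := flatten_len (key σ h).choose (fun i => ((key σ h).choose_spec.1 i).1)
      simp only [hφg, dif_pos h]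
      exact ofFn_getD' a0 _ hlen
    have hmem : ∀ σ ∈ Fintype.piFinset (fun _ : Fin N => S), φg σ ∈ F (N * n) := by
      intro σ hσ
      have h : ∀ i, σ i ∈ S := by simpa [Fintype.mem_piFinset] using hσ
      rw [hF, Finset.mem_filter]
      refine ⟨Finset.mem_univ _, ?_⟩
      rw [hmain σ h]
      exact (key σ h).choose_spec.2
    have hinj : Set.InjOn φg (Fintype.piFinset (fun _ : Fin N => S)) := by
      intro σ hσm σ' hσ'm heq
      have h : ∀ i, σ i ∈ S := by
        have := Finset.mem_coe.mp hσm
        simpa [Fintype.mem_piFinset] using this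
      have h' : ∀ i, σ' i ∈ S := by
        have := Finset.mem_coe.mp hσ'm
        simpa [Fintype.mem_piFinset] using this
      have hfeq : (List.ofFn (key σ h).choose).flatten
          = (List.ofFn (key σ' h').choose).flatten := by
        rw [← hmain σ h, ← hmain σ' h', heq]
      funext i
      by_contra hne
      have hbars : (key σ h).choose i = (key σ' h').choose i := by
        rw [← flatten_chunk n N (key σ h).choose (fun i => ((key σ h).choose_spec.1 i).1) i,
            ← flatten_chunk n N (key σ' h').choose (fun i => ((key σ' h').choose_spec.1 i).1) i,
            hfeq]
      set b : Fin n → A := fun t => ((key σ h).choose i).getD t a0 with hb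
      have hofb : List.ofFn b = (key σ h).choose i :=
        ofFn_getD' a0 _ (((key σ h).choose_spec.1 i).1)
      have hd1 : hammingDist b (σ i) ≤ m := by
        have hh := ((key σ h).choose_spec.1 i).2
        rwa [← hofb, listHamming_ofFn] at hh
      have hd2 : hammingDist b (σ' i) ≤ m := by
        have hh := ((key σ' h').choose_spec.1 i).2
        rw [← hbars, ← hofb, listHamming_ofFn] at hh
        exact hh
      have htri : hammingDist (σ i) (σ' i) ≤ 2 * m := by
        calc hammingDist (σ i) (σ' i)
            ≤ hammingDist (σ i) b + hammingDist b (σ' i) := hammingDist_triangle _ _ _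
          _ ≤ m + m := add_le_add (by rw [hammingDist_comm]; exact hd1) hd2
          _ = 2 * m := by ring
      have hsep := hSsep (σ i) (h i) (σ' i) (h' i) hne
      omega
    calc S.card ^ N = (Fintype.piFinset (fun _ : Fin N => S)).card := by
          simp [Fintype.card_piFinset]
      _ ≤ (F (N * n)).card := Finset.card_le_card_of_injOn φg hmem hinj
  -- splitting
  have hsplit : ∀ N : ℕ, 0 < N → (F (N * n)).card ≤ (F N).card ^ n := by
    intro N hN
    have hlt : ∀ (i : Fin n) (t : Fin N), (i : ℕ) * N + (t : ℕ) < N * n := by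
      intro i t
      have h1 : (i : ℕ) * N + (t : ℕ) < ((i : ℕ) + 1) * N := by
        have := t.isLt; rw [add_mul, one_mul]; omega
      have h2 : ((i : ℕ) + 1) * N ≤ n * N := Nat.mul_le_mul (Nat.succ_le_of_lt i.isLt) le_rfl
      have h3 : n * N = N * n := Nat.mul_comm n N
      omega
    set ψ : (Fin (N * n) → A) → (Fin n → Fin N → A) := fun w i t =>
      w ⟨(i : ℕ) * N + (t : ℕ), hlt i t⟩ with hψ
    have hmemψ : ∀ w ∈ F (N * n), ψ w ∈ Fintype.piFinset (fun _ : Fin n => F N) := by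
      intro w hw
      rw [Fintype.mem_piFinset]
      intro i
      have hwL : InLangS X.carrier (List.ofFn w) := (Finset.mem_filter.mp hw).2
      obtain ⟨x, hx, p, hp⟩ := hwL
      rw [List.length_ofFn, wordAt] at hp
      have hpt := congrFun (List.ofFn_inj.mp hp)
      rw [hF, Finset.mem_filter]
      refine ⟨Finset.mem_univ _, x, hx, p + ((i : ℕ) * N : ℕ), ?_⟩
      rw [List.length_ofFn, wordAt, List.ofFn_inj]
      funext t
      have hcast : p + (((i : ℕ) * N : ℕ) : ℤ) + ((t : ℕ) : ℤ)
          = p + ((((i : ℕ) * N + (t : ℕ) : ℕ)) : ℤ) := by push_cast; ring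
      have h5 := hpt ⟨(i : ℕ) * N + (t : ℕ), hlt i t⟩
      simp only [hψ]
      rw [hcast]
      exact h5
    have hinjψ : Set.InjOn ψ (F (N * n)) := by
      intro w hw w' hw' heq
      funext k
      have hik : (k : ℕ) / N < n := by
        rw [Nat.div_lt_iff_lt_mul hN]
        have := k.isLt
        have h3 : n * N = N * n := Nat.mul_comm n N
        omega
      have hit : (k : ℕ) % N < N := Nat.mod_lt _ hN
      have h2 := congrFun (congrFun heq ⟨(k : ℕ) / N, hik⟩) ⟨(k : ℕ) % N, hit⟩
      simp only [hψ] at h2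
      have hidx : (k : ℕ) / N * N + (k : ℕ) % N = (k : ℕ) := by
        rw [Nat.mul_comm]; exact Nat.div_add_mod _ _
      have hlt2 : (k : ℕ) / N * N + (k : ℕ) % N < N * n := by rw [hidx]; exact k.isLt
      have hk2 : k = (⟨(k : ℕ) / N * N + (k : ℕ) % N, hlt2⟩ : Fin (N * n)) :=
        Fin.ext (by simp [hidx])
      rw [hk2]
      exact h2
    calc (F (N * n)).card ≤ (Fintype.piFinset (fun _ : Fin n => F N)).card :=
          Finset.card_le_card_of_injOn ψ hmemψ hinjψ
      _ = (F N).card ^ n := by simp [Fintype.card_piFinset]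
  -- entropy bound
  have hE : Real.log S.card / n ≤ langEntropy X.carrier := by
    rw [langEntropy]
    apply le_ciInf
    intro N
    rw [hncard (N : ℕ)]
    have h1 : S.card ^ (N : ℕ) ≤ (F (N : ℕ)).card ^ n :=
      le_trans (hglue N) (hsplit N N.pos)
    have h2 : ((S.card : ℝ)) ^ (N : ℕ) ≤ ((F (N : ℕ)).card : ℝ) ^ n := by
      exact_mod_cast h1
    have h3 := Real.log_le_log (by positivity) h2
    rw [Real.log_pow, Real.log_pow] at h3
    rw [div_le_div_iff₀ (by exact_mod_cast hn0) (by exact_mod_cast N.pos)]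
    nlinarith [h3]
  have hlogS : Real.log S.card ≤ n * langEntropy X.carrier := by
    rw [div_le_iff₀ (by exact_mod_cast hn0)] at hE
    calc Real.log S.card ≤ langEntropy X.carrier * n := hE
      _ = n * langEntropy X.carrier := by ring
  have hSexp : (S.card : ℝ) ≤ Real.exp ((n : ℝ) * langEntropy X.carrier) := by
    have hpos : (0 : ℝ) < S.card := by exact_mod_cast hS1
    rw [← Real.exp_log hpos]
    exact Real.exp_le_exp.mpr hlogS
  calc ((F n).card : ℝ) ≤ (S.card : ℝ) * ((n : ℝ) * (Fintype.card A : ℝ)) ^ (2 * m) := by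
        exact_mod_cast hFS
    _ ≤ Real.exp ((n : ℝ) * langEntropy X.carrier)
          * ((n : ℝ) * (Fintype.card A : ℝ)) ^ (2 * m) :=
        mul_le_mul_of_nonneg_right hSexp (by positivity)
    _ = (Fintype.card A : ℝ) ^ (2 * m) * (n : ℝ) ^ (2 * m)
          * Real.exp ((n : ℝ) * langEntropy X.carrier) := by
        rw [mul_pow]; ring
end

section
/- If D is a factorial set of words over a finite alphabet (with D_n nonempty for all n), then the topological entropy of the subshift X(D) consisting of all bi-infinite sequences whose every subword lies in D equals h(D) = lim (1/n) ln|D_n|. -/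
open Real Filter MeasureTheory

/-- A collection of words is factorial if it is closed under passing to
(contiguous) subwords. -/
def Factorial {A : Type*} (D : Set (List A)) : Prop :=
  ∀ u v w : List A, (u ++ v ++ w) ∈ D → v ∈ D

/-- The subshift generated by a factorial collection `D`: all bi-infinite
sequences whose every finite subword lies in `D`. -/
def genShift {A : Type*} (D : Set (List A)) : Set (ℤ → A) :=
  {x : ℤ → A | ∀ (i : ℤ) (n : ℕ), wordAt x i n ∈ D}

section Aux

variable {A : Type*}

lemma wordAt_length (x : ℤ → A) (i : ℤ) (n : ℕ) :
    (wordAt x i n).length = n := by simp [wordAt]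

lemma wordAt_add (x : ℤ → A) (i : ℤ) (a b : ℕ) :
    wordAt x i (a + b) = wordAt x i a ++ wordAt x (i + a) b := by
  unfold wordAt
  rw [List.ofFn_add]
  refine congrArg₂ (· ++ ·) rfl (congrArg List.ofFn ?_)
  funext j
  show x (i + ((a : ℕ) + (j : ℕ) : ℕ)) = x (i + a + j)
  push_cast; ring_nf

lemma wordAt_eq {x : ℤ → A} {i : ℤ} {n : ℕ} {l : List A}
    (hl : l.length = n) (h : ∀ j : ℕ, (hj : j < n) → x (i + j) = l[j]'(by omega)) :
    wordAt x i n = l := by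
  apply List.ext_getElem (by simp [wordAt, hl])
  intro j h1 h2
  simp only [wordAt, List.getElem_ofFn]
  exact h j (by simpa [wordAt] using h1)

/-- Extract a sub-window factor membership via factoriality. -/
lemma wordAt_mem_of_window {D : Set (List A)} (hD : Factorial D)
    {x : ℤ → A} {i j : ℤ} {m M : ℕ} (hji : j ≤ i) (him : i + m ≤ j + M)
    (hM : wordAt x j M ∈ D) : wordAt x i m ∈ D := by
  set a := (i - j).toNat with ha'
  set b := (j + M - (i + m)).toNat with hb'
  have ha : (a : ℤ) = i - j := Int.toNat_of_nonneg (by omega)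
  have hb : (b : ℤ) = j + M - (i + m) := Int.toNat_of_nonneg (by omega)
  have hMeq : M = a + (m + b) := by omega
  rw [hMeq, wordAt_add, wordAt_add] at hM
  have hja : j + (a : ℕ) = i := by omega
  rw [hja, ← List.append_assoc] at hM
  exact hD _ _ _ hM

/-- Compactness: a word extendable on both sides to arbitrary lengths occurs in
a point of the generated subshift. -/
lemma mem_lang_of_ext [Fintype A] [Nonempty A] {D : Set (List A)}
    (hD : Factorial D) (w : List A)
    (hext : ∀ k : ℕ, ∃ u v : List A, u.length = k ∧ v.length = k ∧ u ++ w ++ v ∈ D) :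
    InLangS (genShift D) w := by
  classical
  letI : TopologicalSpace A := ⊥
  haveI : DiscreteTopology A := ⟨rfl⟩
  letI : TopologicalSpace (List A) := ⊥
  haveI : DiscreteTopology (List A) := ⟨rfl⟩
  set n := w.length with hn
  set C : ℕ → Set (ℤ → A) := fun k =>
    {x | wordAt x 0 n = w ∧ wordAt x (-(k : ℤ)) (k + (n + k)) ∈ D} with hC
  have hdec : ∀ k, C (k + 1) ⊆ C k := by
    intro k x hx
    refine ⟨hx.1, ?_⟩
    exact wordAt_mem_of_window hD (by push_cast; omega) (by push_cast; omega) hx.2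
  have hnon : ∀ k, (C k).Nonempty := by
    intro k
    obtain ⟨u, v, hu, hv, huwv⟩ := hext k
    set l := u ++ w ++ v with hl
    have hllen : l.length = k + (n + k) := by
      simp only [hl, List.length_append, hu, hv]; omega
    set a₀ : A := Classical.arbitrary A
    refine ⟨fun j => l.getD (j + k).toNat a₀, ?_, ?_⟩
    · apply wordAt_eq rfl
      intro j hj
      have h1 : ((0 : ℤ) + j + k).toNat = k + j := by omega
      rw [h1, List.getD_eq_getElem l a₀ (by omega)]
      show ((u ++ w) ++ v)[k + j]'(by simp only [List.length_append, hu, hv]; omega) = w[j]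
      rw [List.getElem_append_left (by simp only [List.length_append, hu]; omega),
        List.getElem_append_right (by omega : u.length ≤ k + j)]
      have h2 : k + j - u.length = j := by omega
      simp only [h2]
    · have : wordAt (fun j => l.getD (j + k).toNat a₀) (-(k : ℤ)) (k + (n + k)) = l := by
        apply wordAt_eq hllen
        intro j hj
        have h1 : ((-(k:ℤ)) + j + k).toNat = j := by omega
        rw [h1, List.getD_eq_getElem l a₀ (by omega)]
      rw [this]; exact huwv
  have hcont : ∀ (i : ℤ) (m : ℕ), Continuous fun x : ℤ → A => wordAt x i m := by
    intro i m
    have h1 : Continuous fun (x : ℤ → A) (k : Fin m) => x (i + k) :=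
      continuous_pi fun k => continuous_apply _
    exact Continuous.comp continuous_of_discreteTopology h1
  have hclosed : ∀ k, IsClosed (C k) := by
    intro k
    have : C k = (fun x : ℤ → A => (wordAt x 0 n, wordAt x (-(k : ℤ)) (k + (n + k)))) ⁻¹'
        {p : List A × List A | p.1 = w ∧ p.2 ∈ D} := rfl
    rw [this]
    exact (isClosed_discrete _).preimage (((hcont 0 n).prodMk (hcont _ _)))
  obtain ⟨x, hx⟩ := IsCompact.nonempty_iInter_of_sequence_nonempty_isCompact_isClosed
    C hdec hnon ((hclosed 0).isCompact) hclosed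
  simp only [Set.mem_iInter] at hx
  refine ⟨x, ?_, 0, (hx 0).1⟩
  intro i m
  set k : ℕ := i.natAbs + m + n with hk
  have := (hx k).2
  exact wordAt_mem_of_window hD (by omega) (by omega) this

lemma getElem_idx_congr (l : List A) {i j : ℕ} (h : i = j)
    (hi : i < l.length) : l[i] = l[j]'(h ▸ hi) := by subst h; rfl

/-- The key counting bound: words of length `K + n*t + K` are determined by two
boundary words of length `K` and `t` central blocks, each of which is
`(K,K)`-extendable hence in `L`. -/
lemma count_bound [Fintype A] {D : Set (List A)} (hD : Factorial D)
    {L : Set (List A)} (hLfin : L.Finite) (n K t : ℕ) (hn : 0 < n)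
    (hEL : ∀ w : List A, w.length = n →
      (∃ u v : List A, u.length = K ∧ v.length = K ∧ u ++ w ++ v ∈ D) → w ∈ L) :
    {w ∈ D | w.length = K + n * t + K}.ncard ≤
      Fintype.card A ^ K * Fintype.card A ^ K * L.ncard ^ t := by
  classical
  haveI : Finite (↥L) := hLfin.to_subtype
  set m := K + n * t + K with hm
  set S := {w ∈ D | w.length = m} with hS
  have hblock : ∀ z : ↥S, ∀ i : Fin t, ((z.val.drop (n * i + K)).take n) ∈ L := by
    rintro ⟨z, hzD, hzl⟩ i
    dsimp only
    set b := (z.drop (n * i + K)).take n with hb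
    have hil : n * i + n ≤ n * t := by
      have : (i : ℕ) + 1 ≤ t := i.2
      calc n * i + n = n * (i + 1) := by ring
        _ ≤ n * t := Nat.mul_le_mul_left n this
    have hblen : b.length = n := by
      simp only [hb, List.length_take, List.length_drop, hzl]; omega
    apply hEL b hblen
    refine ⟨(z.drop (n * i)).take K, (z.drop (n * i + K + n)).take K, ?_, ?_, ?_⟩
    · simp only [List.length_take, List.length_drop, hzl]; omega
    · simp only [List.length_take, List.length_drop, hzl]; omega
    · have hseg : (z.drop (n * i)).take (K + (n + K)) =
          (z.drop (n * i)).take K ++ ((z.drop (n * i + K)).take n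
            ++ (z.drop (n * i + K + n)).take K) := by
        rw [List.take_add, List.take_add, List.drop_drop, List.drop_drop]
      have hzeq : z.take (n * i) ++ ((z.drop (n * i)).take (K + (n + K)) ++
          ((z.drop (n * i)).drop (K + (n + K)))) = z := by
        rw [List.take_append_drop, List.take_append_drop]
      have hmem : z.take (n * i) ++ ((z.drop (n * i)).take (K + (n + K))) ++
          ((z.drop (n * i)).drop (K + (n + K))) ∈ D := by
        rw [List.append_assoc, hzeq]; exact hzD
      have := hD _ _ _ hmem
      rw [hseg] at this
      rwa [← List.append_assoc, ← hb] at this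
  set F : ↥S → (Fin K → A) × (Fin K → A) × (Fin t → ↥L) := fun z =>
    (fun j => z.val[(j : ℕ)]'(by rw [z.prop.2]; omega),
     fun j => z.val[K + n * t + (j : ℕ)]'(by rw [z.prop.2]; omega),
     fun i => ⟨(z.val.drop (n * i + K)).take n, hblock z i⟩) with hF
  have hinj : Function.Injective F := by
    rintro z1 z2 h
    have h1 := congrArg Prod.fst h
    have h2 := congrArg (fun p => p.2.1) h
    have h3 := congrArg (fun p => p.2.2) h
    simp only [hF] at h1 h2 h3
    apply Subtype.ext
    apply List.ext_getElem (by rw [z1.prop.2, z2.prop.2])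
    intro j hj1 hj2
    rcases lt_or_ge j K with hjK | hjK
    · exact congrFun h1 ⟨j, hjK⟩
    rcases lt_or_ge j (K + n * t) with hjM | hjM
    · set q := (j - K) / n with hq
      set r := (j - K) % n with hr
      have hdm := Nat.div_add_mod (j - K) n
      rw [← hq, ← hr] at hdm
      have hrn : r < n := Nat.mod_lt _ hn
      have hqt : q < t := by
        have h' : n * q < n * t := by omega
        exact lt_of_mul_lt_mul_left h' (Nat.zero_le n)
      have hje : n * q + K + r = j := by omega
      have hb12 : ((z1.val.drop (n * q + K)).take n) = ((z2.val.drop (n * q + K)).take n) :=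
        congrArg Subtype.val (congrFun h3 ⟨q, hqt⟩)
      have e1 : ∀ (z : ↥S) (hjz : j < z.val.length),
          z.val[j] = ((z.val.drop (n * q + K)).take n)[r]'(by
            simp only [List.length_take, List.length_drop, z.prop.2]; omega) := by
        intro z hjz
        rw [List.getElem_take, List.getElem_drop]
        exact getElem_idx_congr z.val hje.symm hjz
      rw [e1 z1 hj1, e1 z2 hj2]
      exact List.getElem_of_eq hb12 _
    · obtain ⟨j', rfl⟩ : ∃ j', j = K + n * t + j' := ⟨j - (K + n * t), by omega⟩
      have hjlt : j' < K := by rw [z1.prop.2] at hj1; omega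
      exact congrFun h2 ⟨j', hjlt⟩
  calc S.ncard = Nat.card ↥S := (Nat.card_coe_set_eq _).symm
    _ ≤ Nat.card ((Fin K → A) × (Fin K → A) × (Fin t → ↥L)) :=
        Nat.card_le_card_of_injective F hinj
    _ = Fintype.card A ^ K * Fintype.card A ^ K * L.ncard ^ t := by
        rw [Nat.card_prod, Nat.card_prod]
        simp only [Nat.card_fun, Nat.card_eq_fintype_card, Fintype.card_fin,
          Fintype.card_fun, Nat.card_coe_set_eq]
        ring

lemma lognat_nonneg (N : ℕ) : 0 ≤ Real.log N := by
  rcases Nat.eq_zero_or_pos N with h | h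
  · simp [h]
  · exact Real.log_nonneg (by exact_mod_cast h)

lemma lognat_mono {M N : ℕ} (h : M ≤ N) : Real.log M ≤ Real.log N := by
  rcases Nat.eq_zero_or_pos M with h0 | h0
  · simp [h0]; exact lognat_nonneg N
  · exact Real.log_le_log (by exact_mod_cast h0) (by exact_mod_cast h)

end Aux

/-- For a factorial collection `D` with every `D_n` nonempty, the entropy of the
generated subshift `X(D)` equals `h(D) = inf_n (1/n) log |D_n|` (= the limit). -/
theorem stmt7 {A : Type*} [Fintype A] (D : Set (List A)) (hD : Factorial D)
    (hne : ∀ n : ℕ, {w ∈ D | w.length = n}.Nonempty) :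
    langEntropy (genShift D) =
      ⨅ n : ℕ+, Real.log ({w ∈ D | w.length = (n : ℕ)}.ncard) / (n : ℝ) := by
  classical
  obtain ⟨w1, hw1D, hw1l⟩ := hne 1
  obtain ⟨a1, rfl⟩ := List.length_eq_one_iff.mp hw1l
  haveI : Nonempty A := ⟨a1⟩
  have hDfin : ∀ n : ℕ, ({w ∈ D | w.length = n} : Set (List A)).Finite := fun n =>
    (List.finite_length_eq A n).subset (fun w hw => hw.2)
  have hLfin : ∀ n : ℕ,
      ({w : List A | w.length = n ∧ InLangS (genShift D) w}).Finite := fun n =>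
    (List.finite_length_eq A n).subset (fun w hw => hw.1)
  have hLD : ∀ n : ℕ, {w : List A | w.length = n ∧ InLangS (genShift D) w} ⊆
      {w ∈ D | w.length = n} := by
    rintro n w ⟨hl, x, hxS, i, hxw⟩
    exact ⟨by rw [← hxw]; exact hxS i w.length, hl⟩
  have hterm_nonneg : ∀ (c : ℕ) (m : ℕ+), (0:ℝ) ≤ Real.log c / (m : ℝ) :=
    fun c m => div_nonneg (lognat_nonneg c) (by positivity)
  apply le_antisymm
  · -- easy direction
    unfold langEntropy
    apply ciInf_mono
    · exact ⟨0, by rintro y ⟨m, rfl⟩; exact hterm_nonneg _ m⟩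
    · intro n
      have hsub := Set.ncard_le_ncard (hLD (n : ℕ)) (hDfin (n : ℕ))
      exact (div_le_div_iff_of_pos_right (by positivity)).mpr (lognat_mono hsub)
  · -- hard direction
    unfold langEntropy
    apply le_ciInf
    intro n
    set N : ℕ := (n : ℕ) with hN
    have hNpos : 0 < N := n.2
    set Ln : Set (List A) := {w : List A | w.length = N ∧ InLangS (genShift D) w} with hLn
    set E : ℕ → Set (List A) := fun k =>
      {w | w.length = N ∧ ∃ u v : List A, u.length = k ∧ v.length = k ∧ u ++ w ++ v ∈ D}
      with hE
    have hEfin : ∀ k, (E k).Finite := fun k =>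
      (List.finite_length_eq A N).subset (fun w hw => hw.1)
    have hEanti : ∀ k k', k ≤ k' → E k' ⊆ E k := by
      rintro k k' hkk w ⟨hwl, u, v, hu, hv, huwv⟩
      refine ⟨hwl, u.drop (k' - k), v.take k, ?_, ?_, ?_⟩
      · simp only [List.length_drop, hu]; omega
      · simp only [List.length_take, hv]; omega
      refine hD (u.take (k' - k)) _ (v.drop k) ?_
      have heq : u.take (k' - k) ++ (u.drop (k' - k) ++ w ++ v.take k) ++ v.drop k
          = u ++ w ++ v := by
        conv_rhs => rw [← List.take_append_drop (k' - k) u, ← List.take_append_drop k v]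
        simp only [List.append_assoc]
      rw [heq]; exact huwv
    have hrangene : (Set.range fun k => (E k).ncard).Nonempty := ⟨(E 0).ncard, 0, rfl⟩
    obtain ⟨K, hK⟩ := Nat.sInf_mem hrangene
    have hKmin : ∀ k, (E K).ncard ≤ (E k).ncard := by
      intro k
      have h1 : sInf (Set.range fun k => (E k).ncard) ≤ (E k).ncard := Nat.sInf_le ⟨k, rfl⟩
      have h2 : (E K).ncard = sInf (Set.range fun k => (E k).ncard) := hK
      omega
    have hEK : ∀ k, K ≤ k → E k = E K := fun k hk =>
      Set.eq_of_subset_of_ncard_le (hEanti K k hk) (hKmin k) (hEfin K)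
    have hELn : ∀ w ∈ E K, w ∈ Ln := by
      intro w hw
      have hext : ∀ k, ∃ u v : List A, u.length = k ∧ v.length = k ∧ u ++ w ++ v ∈ D := by
        intro k
        have hw' : w ∈ E k :=
          hEanti k (max k K) (le_max_left _ _)
            (by rw [hEK (max k K) (le_max_right _ _)]; exact hw)
        exact hw'.2
      exact ⟨hw.1, mem_lang_of_ext hD w hext⟩
    have hcount : ∀ t : ℕ, ({w ∈ D | w.length = K + N * t + K} : Set (List A)).ncard ≤
        Fintype.card A ^ K * Fintype.card A ^ K * Ln.ncard ^ t := fun t =>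
      count_bound hD (hLfin N) N K t hNpos (fun w hwl hex => hELn w ⟨hwl, hex⟩)
    set cA := Fintype.card A with hcA'
    have hcApos : 0 < cA := Fintype.card_pos
    set ℓ := Ln.ncard with hℓ
    have hℓ1 : 1 ≤ ℓ := by
      by_contra hcon
      have hℓ0 : ℓ = 0 := by omega
      have h1 := hcount 1
      rw [hℓ0] at h1
      simp only [pow_one, mul_zero] at h1
      have hdpos : 0 < ({w ∈ D | w.length = K + N * 1 + K} : Set (List A)).ncard :=
        (Set.ncard_pos (hDfin _)).mpr (hne _)
      omega
    set h : ℝ := ⨅ m : ℕ+, Real.log ({w ∈ D | w.length = (m : ℕ)} : Set (List A)).ncard / (m : ℝ)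
      with hh
    have hbdd : BddBelow (Set.range fun m : ℕ+ =>
        Real.log ({w ∈ D | w.length = (m : ℕ)} : Set (List A)).ncard / (m : ℝ)) :=
      ⟨0, by rintro y ⟨m, rfl⟩; exact hterm_nonneg _ m⟩
    have hh0 : 0 ≤ h := Real.iInf_nonneg fun m => hterm_nonneg _ m
    have hcAR : (1:ℝ) ≤ (cA : ℝ) := by exact_mod_cast hcApos
    have hℓR : (1:ℝ) ≤ (ℓ : ℝ) := by exact_mod_cast hℓ1
    have key : ∀ t : ℕ, 1 ≤ t →
        (N : ℝ) * t * h ≤ 2 * K * Real.log cA + t * Real.log ℓ := by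
      intro t ht
      set m : ℕ+ := ⟨K + N * t + K, by positivity⟩ with hm
      have h1 : h ≤ Real.log ({w ∈ D | w.length = (m : ℕ)} : Set (List A)).ncard / (m : ℝ) :=
        ciInf_le hbdd m
      have hmpos : (0:ℝ) < (m : ℝ) := by
        have : (0:ℕ) < (m : ℕ) := m.2
        exact_mod_cast this
      have h2 : (m : ℝ) * h ≤
          Real.log ({w ∈ D | w.length = (m : ℕ)} : Set (List A)).ncard := by
        rw [le_div_iff₀ hmpos] at h1; linarith
      have h3 : Real.log (({w ∈ D | w.length = (m : ℕ)} : Set (List A)).ncard) ≤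
          Real.log ((cA ^ K * cA ^ K * ℓ ^ t : ℕ)) := lognat_mono (hcount t)
      have h4 : Real.log ((cA ^ K * cA ^ K * ℓ ^ t : ℕ) : ℝ) =
          2 * K * Real.log cA + t * Real.log ℓ := by
        push_cast
        rw [Real.log_mul (by positivity) (by positivity),
          Real.log_mul (by positivity) (by positivity)]
        simp only [Real.log_pow]
        ring
      have h5 : (N : ℝ) * t ≤ (m : ℝ) := by
        have e : (m : ℕ) = K + N * t + K := rfl
        have : (N * t : ℕ) ≤ (m : ℕ) := by omega
        exact_mod_cast this
      calc (N : ℝ) * t * h ≤ (m : ℝ) * h := mul_le_mul_of_nonneg_right h5 hh0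
        _ ≤ Real.log ({w ∈ D | w.length = (m : ℕ)} : Set (List A)).ncard := h2
        _ ≤ Real.log ((cA ^ K * cA ^ K * ℓ ^ t : ℕ) : ℝ) := h3
        _ = 2 * K * Real.log cA + t * Real.log ℓ := h4
    have hfinal : (N : ℝ) * h ≤ Real.log ℓ := by
      apply le_of_forall_pos_le_add
      intro ε hε
      obtain ⟨t0, ht0⟩ := exists_nat_gt (2 * K * Real.log cA / ε)
      set t := max t0 1 with htdef
      have ht1 : 1 ≤ t := le_max_right _ _
      have htpos : (0:ℝ) < (t : ℝ) := by exact_mod_cast ht1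
      have ht2 : 2 * K * Real.log cA ≤ ε * t := by
        have hlt : 2 * K * Real.log cA / ε < (t : ℝ) :=
          lt_of_lt_of_le ht0 (by exact_mod_cast le_max_left t0 1)
        rw [div_lt_iff₀ hε] at hlt
        linarith
      have hk := key t ht1
      have h6 : (N : ℝ) * h * t ≤ (Real.log ℓ + ε) * t := by nlinarith
      exact le_of_mul_le_mul_right h6 htpos
    have hNR : (0:ℝ) < (N : ℝ) := by exact_mod_cast hNpos
    have : h ≤ Real.log ℓ / (N : ℝ) := by
      rw [le_div_iff₀ hNR]; linarith
    exact this
end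

section
/- Let D be a factorial set of words over a finite alphabet with all D_n nonempty, and for i, j ∈ ℕ let D_i^(j) = {w ∈ D_i : there exist u, v ∈ D_j with uwv ∈ D}. Then for every k, n ∈ ℕ, |D_{kn}^{(kn)}| ≤ |D_n^{(kn)}|^k. -/
/-- `D_i^{(j)}`: words of length `i` in `D` that can be extended on both sides by
words of length `j` (in `D`) to a word of `D`. -/
def Dext {A : Type*} (D : Set (List A)) (i j : ℕ) : Set (List A) :=
  {w : List A | w ∈ D ∧ w.length = i ∧
    ∃ u v : List A, u ∈ D ∧ u.length = j ∧ v ∈ D ∧ v.length = j ∧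
      (u ++ w ++ v) ∈ D}

/-- Any contiguous factor of a word of a factorial set lies in the set. -/
lemma factor_mem {A : Type*} {D : Set (List A)} (hD : Factorial D) {T : List A}
    (hT : T ∈ D) (a m : ℕ) : (T.drop a).take m ∈ D := by
  apply hD (T.take a) _ (T.drop (a + m))
  have h1 : (T.drop a).take m ++ T.drop (a + m) = T.drop a := by
    rw [← List.drop_drop, List.take_append_drop]
  rw [List.append_assoc, h1, List.take_append_drop]
  exact hT

/-- A word of length `k*n` is determined by its `k` consecutive blocks of length `n`. -/
lemma blocks_ext {A : Type*} : ∀ (k n : ℕ) (w w' : List A), w.length = k * n →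
    w'.length = k * n →
    (∀ i < k, (w.drop (i * n)).take n = (w'.drop (i * n)).take n) → w = w' := by
  intro k
  induction k with
  | zero =>
    intro n w w' hw hw' _
    simp only [Nat.zero_mul] at hw hw'
    rw [List.length_eq_zero_iff] at hw hw'
    rw [hw, hw']
  | succ k ih =>
    intro n w w' hw hw' hb
    have h0 := hb 0 (Nat.succ_pos k)
    simp only [Nat.zero_mul, List.drop_zero] at h0
    have hrec : w.drop n = w'.drop n := by
      apply ih n
      · rw [List.length_drop, hw]; ring_nf; omega
      · rw [List.length_drop, hw']; ring_nf; omega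
      · intro i hi
        rw [List.drop_drop, List.drop_drop]
        have : n + i * n = (i + 1) * n := by ring
        rw [this]
        exact hb (i + 1) (by omega)
    calc w = w.take n ++ w.drop n := (List.take_append_drop n w).symm
      _ = w'.take n ++ w'.drop n := by rw [h0, hrec]
      _ = w' := List.take_append_drop n w'

/-- For factorial `D` with all `D_n` nonempty, `|D_{kn}^{(kn)}| ≤ |D_n^{(kn)}|^k`. -/
theorem stmt8 {A : Type*} [Fintype A] (D : Set (List A)) (hD : Factorial D)
    (hne : ∀ n : ℕ, {w ∈ D | w.length = n}.Nonempty)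
    (k n : ℕ) (hk : 1 ≤ k) (hn : 1 ≤ n) :
    (Dext D (k * n) (k * n)).ncard ≤ (Dext D n (k * n)).ncard ^ k := by
  classical
  set S := Dext D n (k * n) with hS
  set B := Dext D (k * n) (k * n) with hB
  -- each block of a word of B lies in S
  have hblock : ∀ w ∈ B, ∀ i : ℕ, i < k → (w.drop (i * n)).take n ∈ S := by
    rintro w ⟨hwD, hwlen, u, v, huD, hul, hvD, hvl, huwv⟩ i hi
    have hile : i * n + n ≤ k * n := by
      have : i + 1 ≤ k := hi
      calc i * n + n = (i + 1) * n := by ring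
        _ ≤ k * n := Nat.mul_le_mul_right n this
    set T := u ++ w ++ v with hT
    have hTlen : T.length = 3 * (k * n) := by
      simp [hT, List.length_append, hul, hvl, hwlen]; ring
    -- the block, as a factor of T
    have hbT : (w.drop (i * n)).take n = (T.drop (k * n + i * n)).take n := by
      rw [hT, List.append_assoc, ← hul, List.drop_length_add_append,
        List.drop_append_of_le_length (by omega : i * n ≤ w.length),
        List.take_append_of_le_length]
      rw [List.length_drop]; omega
    refine ⟨factor_mem hD hwD (i * n) n, ?_, ?_⟩
    · rw [List.length_take, List.length_drop, hwlen]; omega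
    · refine ⟨(T.drop (i * n)).take (k * n), ((T.drop (i * n)).drop (k * n + n)).take (k * n),
        factor_mem hD huwv _ _, ?_, ?_, ?_, ?_⟩
      · rw [List.length_take, List.length_drop, hTlen]; omega
      · rw [List.drop_drop]; exact factor_mem hD huwv _ _
      · rw [List.length_take, List.length_drop, List.length_drop, hTlen]; omega
      · have e1 : (w.drop (i * n)).take n = ((T.drop (i * n)).drop (k * n)).take n := by
          rw [List.drop_drop, Nat.add_comm (i * n) (k * n), ← hbT]
        have e2 : ((T.drop (i * n)).drop (k * n + n)).take (k * n)
            = (((T.drop (i * n)).drop (k * n)).drop n).take (k * n) := by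
          rw [List.drop_drop, List.drop_drop, List.drop_drop, ← Nat.add_assoc]
        rw [e1, e2, ← List.take_add, List.drop_drop, ← List.take_add]
        exact factor_mem hD huwv _ _
  -- S is finite, hence so is Fin k → S
  have hSfin : S.Finite := by
    apply (List.finite_length_eq A n).subset
    rintro w ⟨-, hw, -⟩; exact hw
  have : Finite ↥S := hSfin
  -- the injection from B into Fin k → S
  let F : ↥B → (Fin k → ↥S) := fun w i =>
    ⟨((w : List A).drop (i.val * n)).take n, hblock w w.2 i.val i.isLt⟩
  have hFinj : Function.Injective F := by
    rintro ⟨w, hw⟩ ⟨w', hw'⟩ h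
    have hb : ∀ i < k, (w.drop (i * n)).take n = (w'.drop (i * n)).take n := by
      intro i hi
      have := congrFun h ⟨i, hi⟩
      simpa [F, Subtype.ext_iff] using this
    exact Subtype.ext (blocks_ext k n w w' hw.2.1 hw'.2.1 hb)
  have hle : Nat.card ↥B ≤ Nat.card (Fin k → ↥S) :=
    Nat.card_le_card_of_injective F hFinj
  have hcard : Nat.card (Fin k → ↥S) = Nat.card ↥S ^ k := by
    simp [Nat.card_fun]
  rw [← Nat.card_coe_set_eq, ← Nat.card_coe_set_eq]
  calc Nat.card ↥B ≤ Nat.card (Fin k → ↥S) := hle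
    _ = Nat.card ↥S ^ k := hcard
end

section
/- If subshifts X and Y have left almost specification with constant mistake functions g ≡ m and g ≡ n respectively, then the product subshift X × Y has left almost specification with constant mistake function g ≡ m + n. -/
open Real Filter MeasureTheory

/-- The product subshift of `X ⊆ A^ℤ` and `Y ⊆ B^ℤ`. -/
def prodCarrier {A B : Type*} [TopologicalSpace A] [TopologicalSpace B]
    (X : Subshift A) (Y : Subshift B) : Set (ℤ → A × B) :=
  {z : ℤ → A × B | (fun i => (z i).1) ∈ X.carrier ∧ (fun i => (z i).2) ∈ Y.carrier}

lemma shiftMap_iterate {A : Type*} (x : ℤ → A) (t : ℕ) :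
    shiftMap^[t] x = fun k => x (k + t) := by
  induction t generalizing x with
  | zero => simp
  | succ t ih =>
    rw [Function.iterate_succ_apply, ih]
    funext k
    simp [shiftMap]
    ring_nf

lemma mem_iterate {A : Type*} [TopologicalSpace A] (X : Subshift A) {x : ℤ → A}
    (hx : x ∈ X.carrier) (t : ℕ) : shiftMap^[t] x ∈ X.carrier := by
  induction t with
  | zero => exact hx
  | succ t ih => rw [Function.iterate_succ_apply']; exact X.invariant _ ih

lemma wordAt_shift {A : Type*} (x : ℤ → A) (i : ℤ) (t : ℕ) (N : ℕ) :
    wordAt (shiftMap^[t] x) (i - t) N = wordAt x i N := by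
  rw [shiftMap_iterate]
  unfold wordAt
  congr 1
  funext k
  congr 1
  ring

/-- Move an occurrence to any earlier position. -/
lemma occurrence_at {A : Type*} [TopologicalSpace A] (X : Subshift A) {x : ℤ → A}
    (hx : x ∈ X.carrier) {i : ℤ} {N : ℕ} {w : List A} (hw : wordAt x i N = w)
    (p : ℤ) (hp : p ≤ i) : ∃ y ∈ X.carrier, wordAt y p N = w := by
  refine ⟨shiftMap^[(i - p).toNat] x, mem_iterate X hx _, ?_⟩
  have key := wordAt_shift x i (i - p).toNat N
  rw [hw] at key
  have hp2 : i - ((i - p).toNat : ℤ) = p := by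
    rw [Int.toNat_of_nonneg (sub_nonneg.mpr hp)]; ring
  rwa [hp2] at key

lemma wordAt_fst {A B : Type*} (z : ℤ → A × B) (i : ℤ) (N : ℕ) :
    (wordAt z i N).map Prod.fst = wordAt (fun k => (z k).1) i N := by
  simp [wordAt, List.map_ofFn]; rfl

lemma wordAt_snd {A B : Type*} (z : ℤ → A × B) (i : ℤ) (N : ℕ) :
    (wordAt z i N).map Prod.snd = wordAt (fun k => (z k).2) i N := by
  simp [wordAt, List.map_ofFn]; rfl

lemma inLang_fst {A B : Type*} [TopologicalSpace A] [TopologicalSpace B]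
    (X : Subshift A) (Y : Subshift B) {w : List (A × B)}
    (h : InLangS (prodCarrier X Y) w) : InLangS X.carrier (w.map Prod.fst) := by
  obtain ⟨z, hz, i, hi⟩ := h
  exact ⟨fun k => (z k).1, hz.1, i, by rw [List.length_map, ← wordAt_fst, hi]⟩

lemma inLang_snd {A B : Type*} [TopologicalSpace A] [TopologicalSpace B]
    (X : Subshift A) (Y : Subshift B) {w : List (A × B)}
    (h : InLangS (prodCarrier X Y) w) : InLangS Y.carrier (w.map Prod.snd) := by
  obtain ⟨z, hz, i, hi⟩ := h
  exact ⟨fun k => (z k).2, hz.2, i, by rw [List.length_map, ← wordAt_snd, hi]⟩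

lemma wordAt_pair {A B : Type*} (x : ℤ → A) (y : ℤ → B) (i : ℤ) (N : ℕ) :
    wordAt (fun k => (x k, y k)) i N = List.zipWith Prod.mk (wordAt x i N) (wordAt y i N) := by
  unfold wordAt
  apply List.ext_getElem <;> simp

lemma inLang_pair {A B : Type*} [TopologicalSpace A] [TopologicalSpace B]
    (X : Subshift A) (Y : Subshift B) {u : List A} {v : List B}
    (h : u.length = v.length)
    (hu : InLangS X.carrier u) (hv : InLangS Y.carrier v) :
    InLangS (prodCarrier X Y) (List.zipWith Prod.mk u v) := by
  obtain ⟨x, hx, i, hi⟩ := hu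
  obtain ⟨y, hy, j, hj⟩ := hv
  obtain ⟨x', hx', hix⟩ := occurrence_at X hx hi (min i j) (min_le_left _ _)
  obtain ⟨y', hy', hiy⟩ := occurrence_at Y hy hj (min i j) (min_le_right _ _)
  refine ⟨fun k => (x' k, y' k), ⟨hx', hy'⟩, min i j, ?_⟩
  rw [List.length_zipWith, ← h, min_self, wordAt_pair, hix, h, hiy]

lemma hamming_pair {A B : Type*} [DecidableEq A] [DecidableEq B]
    (u u' : List A) (v v' : List B) :
    listHamming (List.zipWith Prod.mk u v) (List.zipWith Prod.mk u' v') ≤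
      listHamming u u' + listHamming v v' := by
  induction u generalizing u' v v' with
  | nil => simp [listHamming]
  | cons a u ih =>
    cases u' with
    | nil => simp [listHamming]
    | cons a' u' =>
      cases v with
      | nil => simp [listHamming]
      | cons c v =>
        cases v' with
        | nil => simp [listHamming]
        | cons c' v' =>
          simp only [List.zipWith_cons_cons, listHamming, List.sum_cons]
          have := ih u' v v'
          by_cases h1 : a = a' <;> by_cases h2 : c = c' <;>
            simp [listHamming, h1, h2, Prod.ext_iff] at * <;> omega

lemma zip_fst_snd {A B : Type*} (w : List (A × B)) :
    List.zipWith Prod.mk (w.map Prod.fst) (w.map Prod.snd) = w := by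
  induction w with
  | nil => rfl
  | cons a w ih => simp [ih]

/-- If `X` has LAS with `g ≡ m` and `Y` has LAS with `g ≡ n`, then the product
subshift `X × Y` has LAS with `g ≡ m + n`. -/
theorem stmt13 {A B : Type*} [Fintype A] [DecidableEq A] [Fintype B] [DecidableEq B]
    [TopologicalSpace A] [DiscreteTopology A] [TopologicalSpace B] [DiscreteTopology B]
    (X : Subshift A) (Y : Subshift B) (m n : ℕ)
    (hX : ∀ w1 w2 : List A, InLangS X.carrier w1 → InLangS X.carrier w2 →
      ∃ b : List A, b.length = w1.length ∧ InLangS X.carrier b ∧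
        listHamming b w1 ≤ m ∧ InLangS X.carrier (b ++ w2))
    (hY : ∀ w1 w2 : List B, InLangS Y.carrier w1 → InLangS Y.carrier w2 →
      ∃ b : List B, b.length = w1.length ∧ InLangS Y.carrier b ∧
        listHamming b w1 ≤ n ∧ InLangS Y.carrier (b ++ w2)) :
    ∀ w1 w2 : List (A × B),
      InLangS (prodCarrier X Y) w1 → InLangS (prodCarrier X Y) w2 →
      ∃ b : List (A × B), b.length = w1.length ∧ InLangS (prodCarrier X Y) b ∧
        listHamming b w1 ≤ m + n ∧ InLangS (prodCarrier X Y) (b ++ w2) := by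
  intro w1 w2 h1 h2
  obtain ⟨bA, hlA, hbA, hhA, haA⟩ :=
    hX (w1.map Prod.fst) (w2.map Prod.fst) (inLang_fst X Y h1) (inLang_fst X Y h2)
  obtain ⟨bB, hlB, hbB, hhB, haB⟩ :=
    hY (w1.map Prod.snd) (w2.map Prod.snd) (inLang_snd X Y h1) (inLang_snd X Y h2)
  simp only [List.length_map] at hlA hlB
  refine ⟨List.zipWith Prod.mk bA bB, by simp [List.length_zipWith, hlA, hlB], ?_, ?_, ?_⟩
  · exact inLang_pair X Y (by omega) hbA hbB
  · calc listHamming (List.zipWith Prod.mk bA bB) w1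
        = listHamming (List.zipWith Prod.mk bA bB)
            (List.zipWith Prod.mk (w1.map Prod.fst) (w1.map Prod.snd)) := by
          rw [zip_fst_snd]
      _ ≤ listHamming bA (w1.map Prod.fst) + listHamming bB (w1.map Prod.snd) :=
          hamming_pair _ _ _ _
      _ ≤ m + n := Nat.add_le_add hhA hhB
  · have hzip : List.zipWith Prod.mk bA bB ++ w2 =
        List.zipWith Prod.mk (bA ++ w2.map Prod.fst) (bB ++ w2.map Prod.snd) := by
      rw [List.zipWith_append (by omega : bA.length = bB.length), zip_fst_snd]
    rw [hzip]
    exact inLang_pair X Y (by simp; omega) haA haB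
end

section
/- Let g: ℕ → ℕ be nondecreasing with g(n)/n → 0, and let X be the bounded density shift over {0,1} consisting of all bi-infinite sequences whose every length-n subword has at most g(n) ones. Then the only shift-invariant Borel probability measure on X is the point mass at the all-zeros sequence, and consequently the topological entropy of X is 0. -/
open Real Filter MeasureTheory
open scoped ENNReal

/-- The bounded density shift over `{0,1}` (here `Bool`, with `true` playing the
role of the symbol 1). -/
def bdsCarrier (g : ℕ → ℕ) : Set (ℤ → Bool) :=
  {x : ℤ → Bool | ∀ (i : ℤ) (n : ℕ), (wordAt x i n).count true ≤ g n}



lemma count_true_ofFn : ∀ (n : ℕ) (f : Fin n → Bool),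
    (List.ofFn f).count true = ∑ i : Fin n, if f i = true then 1 else 0 := by
  intro n
  induction n with
  | zero => intro f; simp
  | succ n ih =>
    intro f
    rw [List.ofFn_succ, List.count_cons, ih, Fin.sum_univ_succ]
    cases h : f 0 <;> simp [h] <;> omega

lemma getD_ofFn_eq (w : List Bool) (n : ℕ) (h : w.length = n) :
    w = List.ofFn (fun i : Fin n => w.getD (i : ℕ) false) := by
  apply List.ext_getElem (by simp [h])
  intro j h1 h2
  simp only [List.getElem_ofFn]
  rw [List.getD_eq_getElem w false (by omega)]

lemma mul_log_inv_le (a : ℝ) (ha : 0 < a) : a * Real.log (1/a) ≤ 2 * Real.sqrt a := by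
  have hs : (0:ℝ) < Real.sqrt (1/a) := Real.sqrt_pos.mpr (by positivity)
  have h1 : Real.log (1/a) ≤ 2 * Real.sqrt (1/a) := by
    have hl := Real.log_le_sub_one_of_pos hs
    have hsq : Real.log (1/a) = 2 * Real.log (Real.sqrt (1/a)) := by
      rw [← Real.sq_sqrt (show (0:ℝ) ≤ 1/a by positivity), Real.log_pow]
      push_cast
      ring_nf
      rw [Real.sqrt_sq (Real.sqrt_nonneg _)]
    rw [hsq]; nlinarith [hs.le]
  calc a * Real.log (1/a) ≤ a * (2 * Real.sqrt (1/a)) :=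
        mul_le_mul_of_nonneg_left h1 ha.le
    _ = 2 * (a / Real.sqrt a) := by
        rw [one_div, Real.sqrt_inv]; field_simp
    _ = 2 * Real.sqrt a := by rw [Real.div_sqrt]

lemma card_boundedLists (n m : ℕ) :
    {w : List Bool | w.length = n ∧ w.count true ≤ m}.ncard
      ≤ ∑ k ∈ Finset.range (m+1), n.choose k := by
  classical
  set t : Set (Finset (Fin n)) := {s : Finset (Fin n) | s.card ≤ m} with ht
  have hcard : ∀ w : List Bool, w.length = n →
      (Finset.univ.filter (fun i : Fin n => w.getD (i:ℕ) false = true)).card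
        = w.count true := by
    intro w hw
    rw [Finset.card_filter]
    conv_rhs => rw [getD_ofFn_eq w n hw]
    rw [count_true_ofFn]
  have h1 : {w : List Bool | w.length = n ∧ w.count true ≤ m}.ncard ≤ t.ncard := by
    apply Set.ncard_le_ncard_of_injOn
      (fun w => Finset.univ.filter (fun i : Fin n => w.getD (i:ℕ) false = true))
    · rintro w ⟨hw1, hw2⟩
      simp only [ht, Set.mem_setOf_eq]
      rw [hcard w hw1]; exact hw2
    · rintro w ⟨hw1, _⟩ v ⟨hv1, _⟩ hwv
      have hfun : (fun i : Fin n => w.getD (i:ℕ) false)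
          = (fun i : Fin n => v.getD (i:ℕ) false) := by
        funext i
        have := Finset.ext_iff.mp hwv i
        simp only [Finset.mem_filter, Finset.mem_univ, true_and] at this
        cases hwi : w.getD (i:ℕ) false <;> cases hvi : v.getD (i:ℕ) false <;>
          simp_all
      rw [getD_ofFn_eq w n hw1, getD_ofFn_eq v n hv1, hfun]
  refine h1.trans ?_
  have ht2 : t = ↑(Finset.univ.filter (fun s : Finset (Fin n) => s.card ≤ m)) := by
    ext s; simp [ht]
  rw [ht2, Set.ncard_coe_finset]
  have hb : Finset.univ.filter (fun s : Finset (Fin n) => s.card ≤ m)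
      = (Finset.range (m+1)).biUnion (fun k => Finset.univ.powersetCard k) := by
    ext s
    simp [Finset.mem_powersetCard, Nat.lt_succ_iff]
  rw [hb]
  rw [Finset.card_biUnion]
  · apply le_of_eq
    apply Finset.sum_congr rfl
    intro k _
    rw [Finset.card_powersetCard, Finset.card_univ, Fintype.card_fin]
  · intro a _ b _ hab
    simp only [Finset.disjoint_left]
    intro s hs1 hs2
    rw [Finset.mem_powersetCard] at hs1 hs2
    exact hab (hs1.2.symm.trans hs2.2)

lemma binom_sum_bound (n m : ℕ) (h1 : 1 ≤ m) (h2 : m ≤ n) :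
    Real.log (∑ k ∈ Finset.range (m+1), (n.choose k : ℝ))
      ≤ m + m * Real.log ((n:ℝ)/m) := by
  have hn0 : 1 ≤ n := le_trans h1 h2
  have hn : (0:ℝ) < n := by exact_mod_cast Nat.lt_of_lt_of_le Nat.zero_lt_one hn0
  have hm : (0:ℝ) < m := by exact_mod_cast h1
  set lam : ℝ := (m:ℝ)/n with hlam
  have hlam0 : 0 < lam := by positivity
  have hlam1 : lam ≤ 1 := by
    rw [hlam, div_le_one hn]; exact_mod_cast h2
  set B : ℝ := ∑ k ∈ Finset.range (m+1), (n.choose k : ℝ) with hB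
  have hB1 : (1:ℝ) ≤ B := by
    rw [hB]
    calc (1:ℝ) = (n.choose 0 : ℝ) := by simp
      _ ≤ _ := Finset.single_le_sum (f := fun k => (n.choose k : ℝ))
          (fun i _ => by positivity) (Finset.mem_range.mpr (by omega))
  have hBbound : B * lam ^ m ≤ (lam + 1) ^ n := by
    calc B * lam ^ m = ∑ k ∈ Finset.range (m+1), (n.choose k : ℝ) * lam ^ m := by
          rw [hB, Finset.sum_mul]
      _ ≤ ∑ k ∈ Finset.range (m+1), (n.choose k : ℝ) * lam ^ k := by
          apply Finset.sum_le_sum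
          intro k hk
          apply mul_le_mul_of_nonneg_left _ (by positivity)
          exact pow_le_pow_of_le_one hlam0.le hlam1 (Nat.lt_succ_iff.mp (Finset.mem_range.mp hk))
      _ ≤ ∑ k ∈ Finset.range (n+1), (n.choose k : ℝ) * lam ^ k := by
          apply Finset.sum_le_sum_of_subset_of_nonneg
          · exact Finset.range_subset_range.mpr (by omega)
          · intro k _ _; positivity
      _ = (lam + 1) ^ n := by
          rw [add_pow]
          apply Finset.sum_congr rfl
          intro k _; ring
  have hBle : B ≤ (lam + 1) ^ n / lam ^ m := by
    rw [le_div_iff₀ (by positivity)]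
    exact hBbound
  have hlog : Real.log B ≤ n * Real.log (lam + 1) - m * Real.log lam := by
    calc Real.log B ≤ Real.log ((lam + 1) ^ n / lam ^ m) :=
          Real.log_le_log (by linarith) hBle
      _ = n * Real.log (lam + 1) - m * Real.log lam := by
          rw [Real.log_div (by positivity) (by positivity), Real.log_pow, Real.log_pow]
  have hlog1 : Real.log (lam + 1) ≤ lam := by
    have := Real.log_le_sub_one_of_pos (show (0:ℝ) < lam + 1 by linarith)
    linarith
  have hloglam : -Real.log lam = Real.log ((n:ℝ)/m) := by
    rw [hlam, ← Real.log_inv]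
    congr 1
    field_simp
  have hnl : (n:ℝ) * lam = m := by rw [hlam]; field_simp
  calc Real.log B ≤ n * Real.log (lam + 1) - m * Real.log lam := hlog
    _ ≤ n * lam - m * Real.log lam := by
        have : (n:ℝ) * Real.log (lam+1) ≤ n * lam := mul_le_mul_of_nonneg_left hlog1 hn.le
        linarith
    _ = m + m * Real.log ((n:ℝ)/m) := by
        rw [hnl, ← hloglam]; ring

lemma measurable_bdsCarrier (g : ℕ → ℕ) : MeasurableSet (bdsCarrier g) := by
  have : bdsCarrier g = ⋂ (i : ℤ), ⋂ (n : ℕ),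
      {x : ℤ → Bool | (wordAt x i n).count true ≤ g n} := by
    ext x; simp [bdsCarrier, Set.mem_iInter]
  rw [this]
  apply MeasurableSet.iInter; intro i
  apply MeasurableSet.iInter; intro n
  have hmeas : Measurable (fun x : ℤ → Bool => fun k : Fin n => x (i + (k:ℕ))) :=
    measurable_pi_lambda _ (fun k => measurable_pi_apply _)
  have heq : {x : ℤ → Bool | (wordAt x i n).count true ≤ g n}
      = (fun x : ℤ → Bool => fun k : Fin n => x (i + (k:ℕ))) ⁻¹'
        {f : Fin n → Bool | (List.ofFn f).count true ≤ g n} := rfl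
  rw [heq]
  exact hmeas ((Set.to_countable _).measurableSet)

lemma part1 (g : ℕ → ℕ)
    (hg : Filter.Tendsto (fun n : ℕ => (g n : ℝ) / (n : ℝ)) Filter.atTop (nhds 0))
    (μ : MeasureTheory.Measure (ℤ → Bool)) (hprob : MeasureTheory.IsProbabilityMeasure μ)
    (hpres : MeasureTheory.MeasurePreserving shiftMap μ μ) (hcar : μ (bdsCarrier g) = 1) :
    μ = MeasureTheory.Measure.dirac (fun _ : ℤ => false) := by
  classical
  have hA : ∀ k : ℤ, MeasurableSet {x : ℤ → Bool | x k = true} := by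
    intro k
    have : {x : ℤ → Bool | x k = true} = (fun x : ℤ → Bool => x k) ⁻¹' {true} := by
      ext x; simp
    rw [this]
    exact measurable_pi_apply k (measurableSet_singleton true)
  have hshift : ∀ k : ℤ, μ {x : ℤ → Bool | x (k+1) = true} = μ {x : ℤ → Bool | x k = true} := by
    intro k
    have hpre : shiftMap ⁻¹' {x : ℤ → Bool | x k = true} = {x : ℤ → Bool | x (k+1) = true} := rfl
    rw [← hpre]
    exact hpres.measure_preimage (hA k).nullMeasurableSet
  have hup : ∀ k : ℕ, μ {x : ℤ → Bool | x (k:ℤ) = true} = μ {x : ℤ → Bool | x 0 = true} := by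
    intro k
    induction k with
    | zero => norm_num
    | succ k ih =>
      have : ((k+1 : ℕ) : ℤ) = (k:ℤ) + 1 := by push_cast; ring
      rw [this, hshift k, ih]
  -- key inequality
  have hccompl : μ (bdsCarrier g)ᶜ = 0 :=
    (prob_compl_eq_zero_iff (measurable_bdsCarrier g)).mpr hcar
  have hae : ∀ᵐ x ∂μ, x ∈ bdsCarrier g := hccompl
  have key : ∀ n : ℕ, (n : ℝ≥0∞) * μ {x : ℤ → Bool | x 0 = true} ≤ (g n : ℝ≥0∞) := by
    intro n
    have hpt : ∀ x : ℤ → Bool,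
        (∑ k ∈ Finset.range n, ({y : ℤ → Bool | y ((k:ℕ):ℤ) = true}).indicator
          (1 : (ℤ → Bool) → ℝ≥0∞) x) = (((wordAt x 0 n).count true : ℕ) : ℝ≥0∞) := by
      intro x
      rw [wordAt, count_true_ofFn]
      push_cast
      rw [← Fin.sum_univ_eq_sum_range (fun k : ℕ =>
        ({y : ℤ → Bool | y ((k:ℕ):ℤ) = true}).indicator (1 : (ℤ → Bool) → ℝ≥0∞) x)]
      apply Finset.sum_congr rfl
      intro k _
      simp only [Set.indicator_apply, Set.mem_setOf_eq, Pi.one_apply, zero_add]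
    calc (n : ℝ≥0∞) * μ {x : ℤ → Bool | x 0 = true}
        = ∑ k ∈ Finset.range n, μ {x : ℤ → Bool | x ((k:ℕ):ℤ) = true} := by
          rw [Finset.sum_congr rfl (fun k _ => hup k), Finset.sum_const, Finset.card_range,
            nsmul_eq_mul]
      _ = ∑ k ∈ Finset.range n, ∫⁻ x, ({y : ℤ → Bool | y ((k:ℕ):ℤ) = true}).indicator
            (1 : (ℤ → Bool) → ℝ≥0∞) x ∂μ := by
          apply Finset.sum_congr rfl
          intro k _
          rw [lintegral_indicator_one (hA k)]
      _ = ∫⁻ x, ∑ k ∈ Finset.range n, ({y : ℤ → Bool | y ((k:ℕ):ℤ) = true}).indicator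
            (1 : (ℤ → Bool) → ℝ≥0∞) x ∂μ := by
          rw [lintegral_finset_sum]
          intro k _
          exact (measurable_one.indicator (hA k))
      _ ≤ ∫⁻ _, (g n : ℝ≥0∞) ∂μ := by
          apply lintegral_mono_ae
          filter_upwards [hae] with x hx
          rw [hpt x]
          exact_mod_cast Nat.cast_le.mpr (hx 0 n)
      _ = (g n : ℝ≥0∞) := by simp
  -- conclude measure of cylinder is zero
  have hfin : μ {x : ℤ → Bool | x 0 = true} ≠ ⊤ := measure_ne_top μ _
  set c := (μ {x : ℤ → Bool | x 0 = true}).toReal with hc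
  have hcreal : ∀ᶠ n : ℕ in atTop, c ≤ (g n : ℝ) / (n : ℝ) := by
    filter_upwards [eventually_ge_atTop 1] with n hn
    have h2 : (n : ℝ) * c ≤ (g n : ℝ) := by
      have h3 := ENNReal.toReal_mono (by simp) (key n)
      rw [ENNReal.toReal_mul] at h3
      simpa using h3
    rw [le_div_iff₀ (by exact_mod_cast Nat.lt_of_lt_of_le Nat.zero_lt_one hn : (0:ℝ) < n)]
    linarith
  have hc0 : c = 0 := le_antisymm (ge_of_tendsto hg hcreal) ENNReal.toReal_nonneg
  have hzero : μ {x : ℤ → Bool | x 0 = true} = 0 := by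
    have := (ENNReal.toReal_eq_zero_iff _).mp (hc ▸ hc0)
    exact this.resolve_right hfin
  have hall : ∀ k : ℤ, μ {x : ℤ → Bool | x k = true} = 0 := by
    intro k
    induction k using Int.induction_on with
    | zero => exact hzero
    | succ i ih => rw [hshift (i:ℤ)]; exact ih
    | pred i ih =>
      have h := hshift (-(i:ℤ) - 1)
      have h2 : (-(i:ℤ) - 1) + 1 = -(i:ℤ) := by ring
      rw [h2] at h
      rw [← h]; exact ih
  have hcompl : μ ({(fun _ : ℤ => false)}ᶜ : Set (ℤ → Bool)) = 0 := by
    have heq : ({(fun _ : ℤ => false)}ᶜ : Set (ℤ → Bool)) = ⋃ k : ℤ, {x : ℤ → Bool | x k = true} := by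
      ext x
      simp only [Set.mem_compl_iff, Set.mem_singleton_iff, Set.mem_iUnion, Set.mem_setOf_eq,
        funext_iff, not_forall]
      constructor
      · rintro ⟨k, hk⟩; exact ⟨k, by revert hk; cases x k <;> simp⟩
      · rintro ⟨k, hk⟩; exact ⟨k, by simp [hk]⟩
    rw [heq]
    exact measure_iUnion_null hall
  apply Measure.ext
  intro s hs
  rw [Measure.dirac_apply' _ hs]
  by_cases hmem : (fun _ : ℤ => false) ∈ s
  · have h1 : μ sᶜ = 0 := by
      apply measure_mono_null _ hcompl
      exact Set.compl_subset_compl.mpr (Set.singleton_subset_iff.mpr hmem)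
    have h2 := measure_add_measure_compl (μ := μ) hs
    rw [h1, add_zero, measure_univ] at h2
    rw [h2]
    simp [Set.indicator_apply, hmem]
  · have h1 : s ⊆ ({(fun _ : ℤ => false)}ᶜ : Set (ℤ → Bool)) := by
      intro x hx
      simp only [Set.mem_compl_iff, Set.mem_singleton_iff]
      rintro rfl
      exact hmem hx
    rw [measure_mono_null h1 hcompl]
    simp [Set.indicator_apply, hmem]

lemma part2 (g : ℕ → ℕ)
    (hg : Filter.Tendsto (fun n : ℕ => (g n : ℝ) / (n : ℝ)) Filter.atTop (nhds 0)) :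
    langEntropy (bdsCarrier g) = 0 := by
  classical
  have hzero : (fun _ : ℤ => false) ∈ bdsCarrier g := by
    intro i n
    simp [wordAt, List.ofFn_const, List.count_replicate]
  have hmem : ∀ n : ℕ, (List.replicate n false) ∈
      {w : List Bool | w.length = n ∧ InLangS (bdsCarrier g) w} := by
    intro n
    refine ⟨(List.length_replicate : (List.replicate n false).length = n), ⟨(fun _ => false), hzero, 0, ?_⟩⟩
    rw [List.length_replicate]
    simp [wordAt, List.ofFn_const]
  have hfin : ∀ n : ℕ, {w : List Bool | w.length = n ∧ InLangS (bdsCarrier g) w}.Finite :=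
    fun n => (List.finite_length_eq Bool n).subset (fun w hw => hw.1)
  have hpos : ∀ n : ℕ, 1 ≤ {w : List Bool | w.length = n ∧ InLangS (bdsCarrier g) w}.ncard :=
    fun n => (Set.ncard_pos (hfin n)).mpr ⟨_, hmem n⟩
  have hsub : ∀ n : ℕ, {w : List Bool | w.length = n ∧ InLangS (bdsCarrier g) w}.ncard
      ≤ ∑ k ∈ Finset.range (g n + 1), n.choose k := by
    intro n
    refine le_trans (Set.ncard_le_ncard ?_
      ((List.finite_length_eq Bool n).subset (fun w hw => hw.1))) (card_boundedLists n (g n))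
    rintro w ⟨hw1, x, hx, i, hxw⟩
    refine ⟨hw1, ?_⟩
    calc w.count true = (wordAt x i w.length).count true := by rw [hxw]
      _ ≤ g w.length := hx i w.length
      _ = g n := by rw [hw1]
  have hF0 : ∀ n : ℕ+, 0 ≤ Real.log
      ({w : List Bool | w.length = (n:ℕ) ∧ InLangS (bdsCarrier g) w}.ncard) / ((n:ℕ) : ℝ) := by
    intro n
    apply div_nonneg _ (by positivity)
    apply Real.log_nonneg
    exact_mod_cast hpos (n:ℕ)
  have hbdd : BddBelow (Set.range fun n : ℕ+ => Real.log
      ({w : List Bool | w.length = (n:ℕ) ∧ InLangS (bdsCarrier g) w}.ncard) / ((n:ℕ) : ℝ)) := by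
    refine ⟨0, ?_⟩
    rintro _ ⟨n, rfl⟩
    exact hF0 n
  unfold langEntropy
  apply le_antisymm
  · apply _root_.le_of_forall_pos_le_add
    intro ε hε
    rw [zero_add]
    -- choose a good n
    set α : ℕ → ℝ := fun n => (g n : ℝ) / (n : ℝ) with hα
    have htend : Filter.Tendsto (fun n => α n + 2 * Real.sqrt (α n)) atTop (nhds 0) := by
      have h2 : Filter.Tendsto (fun n => 2 * Real.sqrt (α n)) atTop (nhds 0) := by
        have := (hg.sqrt).const_mul (2:ℝ)
        simpa using this
      simpa using hg.add h2
    have hev1 : ∀ᶠ n : ℕ in atTop, α n + 2 * Real.sqrt (α n) < ε :=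
      htend.eventually_lt_const hε
    have hev2 : ∀ᶠ n : ℕ in atTop, α n < 1 := hg.eventually_lt_const one_pos
    obtain ⟨n, ⟨hβ, hα1⟩, hn1⟩ := ((hev1.and hev2).and (eventually_ge_atTop 1)).exists
    have hnR : (0:ℝ) < (n:ℝ) := by exact_mod_cast Nat.lt_of_lt_of_le Nat.zero_lt_one hn1
    have hgn : g n ≤ n := by
      rw [hα] at hα1
      simp only at hα1
      rw [div_lt_one hnR] at hα1
      exact_mod_cast hα1.le
    refine le_trans (ciInf_le hbdd ⟨n, hn1⟩) ?_
    show Real.log ({w : List Bool | w.length = n ∧ InLangS (bdsCarrier g) w}.ncard) / (n:ℝ) ≤ ε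
    by_cases h0 : g n = 0
    · have hone : {w : List Bool | w.length = n ∧ InLangS (bdsCarrier g) w}.ncard = 1 := by
        refine le_antisymm ?_ (hpos n)
        have := hsub n
        simpa [h0] using this
      rw [hone]
      simp
      linarith
    · have h1 : 1 ≤ g n := Nat.one_le_iff_ne_zero.mpr h0
      have hm : (0:ℝ) < (g n : ℝ) := by exact_mod_cast h1
      have hαpos : 0 < α n := by rw [hα]; positivity
      have hle1 : Real.log ({w : List Bool | w.length = n ∧ InLangS (bdsCarrier g) w}.ncard)
          ≤ Real.log (∑ k ∈ Finset.range (g n + 1), (n.choose k : ℝ)) := by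
        apply Real.log_le_log (by exact_mod_cast hpos n)
        push_cast
        exact_mod_cast hsub n
      have hle2 := binom_sum_bound n (g n) h1 hgn
      have hle3 : Real.log ({w : List Bool | w.length = n ∧ InLangS (bdsCarrier g) w}.ncard) / (n:ℝ)
          ≤ ((g n : ℝ) + (g n : ℝ) * Real.log ((n:ℝ)/(g n : ℝ))) / (n:ℝ) := by
        exact (div_le_div_iff_of_pos_right hnR).mpr (hle1.trans hle2)
      have key2 : ((g n : ℝ) + (g n : ℝ) * Real.log ((n:ℝ)/(g n : ℝ))) / (n:ℝ)
          = α n + α n * Real.log (1 / α n) := by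
        rw [hα]
        simp only
        rw [one_div_div]
        field_simp
      have hle4 : α n * Real.log (1 / α n) ≤ 2 * Real.sqrt (α n) := mul_log_inv_le _ hαpos
      calc Real.log ({w : List Bool | w.length = n ∧ InLangS (bdsCarrier g) w}.ncard) / (n:ℝ)
          ≤ α n + α n * Real.log (1 / α n) := by rw [← key2]; exact hle3
        _ ≤ α n + 2 * Real.sqrt (α n) := by linarith
        _ ≤ ε := hβ.le
  · exact le_ciInf hF0

/-- For `g` nondecreasing with `g(n)/n → 0`, the only shift-invariant Borel
probability measure on the bounded density shift is the point mass at the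
all-zeros sequence, and the topological entropy of the shift is 0. -/
theorem stmt16 (g : ℕ → ℕ) (hmono : Monotone g)
    (hg : Filter.Tendsto (fun n : ℕ => (g n : ℝ) / (n : ℝ)) Filter.atTop (nhds 0)) :
    (∀ μ : MeasureTheory.Measure (ℤ → Bool), MeasureTheory.IsProbabilityMeasure μ →
      MeasureTheory.MeasurePreserving shiftMap μ μ → μ (bdsCarrier g) = 1 →
      μ = MeasureTheory.Measure.dirac (fun _ : ℤ => false)) ∧
    langEntropy (bdsCarrier g) = 0 :=
  ⟨fun μ h1 h2 h3 => part1 g hg μ h1 h2 h3, part2 g hg⟩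
end

section
/- The subshift X = {x ∈ {0,1}^ℤ : x contains at most one occurrence of the symbol 1} has left almost specification with constant mistake function g ≡ 1, but X is not irreducible. -/
open Real Filter MeasureTheory

/-- The subshift of 0-1 sequences with at most one occurrence of the symbol 1
(`true`). -/
def atMostOneOne : Set (ℤ → Bool) :=
  {x : ℤ → Bool | ∀ i j : ℤ, x i = true → x j = true → i = j}

def Uniq (w : List Bool) : Prop :=
  ∀ i j : ℕ, ∀ _ : i < w.length, ∀ _ : j < w.length,
    w[i] = true → w[j] = true → i = j

lemma lang_uniq {w : List Bool} (h : InLangS atMostOneOne w) : Uniq w := by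
  obtain ⟨x, hx, k, hw⟩ := h
  intro i j hi hj hwi hwj
  have key : ∀ m, ∀ hm : m < w.length, w[m] = x (k + m) := by
    intro m hm
    rw [List.getElem_of_eq hw.symm hm]
    simp [wordAt]
  have := hx (k + i) (k + j) ((key i hi) ▸ hwi) ((key j hj) ▸ hwj)
  omega

lemma count_le_one_of_uniq : ∀ w : List Bool, Uniq w → w.count true ≤ 1 := by
  intro w
  induction w with
  | nil => simp
  | cons a t ih =>
    intro P
    cases a with
    | false =>
      have : Uniq t := by
        intro i j hi hj h1 h2
        have := P (i+1) (j+1) (by simpa using hi) (by simpa using hj)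
          (by simpa using h1) (by simpa using h2)
        omega
      simpa [List.count_cons] using ih this
    | true =>
      have ht : t.count true = 0 := by
        rw [List.count_eq_zero]
        intro hmem
        obtain ⟨i, hi, hgi⟩ := List.getElem_of_mem hmem
        have := P 0 (i+1) (by simp) (by simpa using hi) rfl (by simpa using hgi)
        omega
      simp [List.count_cons, ht]

lemma uniq_of_count : ∀ w : List Bool, w.count true ≤ 1 → Uniq w := by
  intro w
  induction w with
  | nil => intro _ i j hi; simp at hi
  | cons a t ih =>
    intro h i j hi hj h1 h2
    cases a with
    | false =>
      cases i with
      | zero => simp at h1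
      | succ i =>
        cases j with
        | zero => simp at h2
        | succ j =>
          have := ih (by simpa [List.count_cons] using h) i j
            (by simpa using hi) (by simpa using hj)
            (by simpa using h1) (by simpa using h2)
          omega
    | true =>
      have ht : t.count true = 0 := by
        have := h
        simp [List.count_cons] at this
        omega
      cases i with
      | zero =>
        cases j with
        | zero => rfl
        | succ j =>
          exfalso
          have hmem : true ∈ t := by
            have hjj : j < t.length := by simp only [List.length_cons] at hj; omega
            have : t[j] = true := by simpa using h2
            exact this ▸ List.getElem_mem _
          rw [List.count_eq_zero] at ht
          exact ht hmem
      | succ i =>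
        exfalso
        have hmem : true ∈ t := by
          have hii : i < t.length := by simp only [List.length_cons] at hi; omega
          have : t[i] = true := by simpa using h1
          exact this ▸ List.getElem_mem _
        rw [List.count_eq_zero] at ht
        exact ht hmem

lemma inLang_of_uniq (w : List Bool) (h : Uniq w) : InLangS atMostOneOne w := by
  refine ⟨fun j => if hj : 0 ≤ j ∧ j < w.length then w[j.toNat]'(by omega) else false, ?_, 0, ?_⟩
  · intro i j hi hj
    dsimp only at hi hj
    split at hi
    · split at hj
      · have := h i.toNat j.toNat (by omega) (by omega) hi hj
        omega
      · simp at hj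
    · simp at hi
  · apply List.ext_getElem
    · simp [wordAt]
    · intro k hk hk'
      simp only [wordAt, List.getElem_ofFn]
      have h0 : (0 : ℤ) + (k : ℕ) = (k : ℕ) := by omega
      rw [h0]
      rw [dif_pos ⟨by omega, by exact_mod_cast hk'⟩]
      simp

lemma ham_replicate : ∀ w : List Bool,
    listHamming (List.replicate w.length false) w = w.count true := by
  intro w
  induction w with
  | nil => simp [listHamming]
  | cons a t ih =>
    simp only [listHamming, List.length_cons, List.replicate_succ, List.zipWith_cons_cons,
      List.sum_cons, List.count_cons] at ih ⊢
    cases a <;> (try simp) <;> omega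

/-- The subshift of 0-1 sequences containing at most one 1 has left almost
specification with constant mistake function `g ≡ 1`, but is not irreducible. -/
theorem stmt17 :
    (∀ w1 w2 : List Bool, InLangS atMostOneOne w1 → InLangS atMostOneOne w2 →
      ∃ b : List Bool, b.length = w1.length ∧ InLangS atMostOneOne b ∧
        listHamming b w1 ≤ 1 ∧ InLangS atMostOneOne (b ++ w2)) ∧
    ¬ (∀ u v : List Bool, InLangS atMostOneOne u → InLangS atMostOneOne v →
        ∃ z : List Bool, InLangS atMostOneOne (u ++ z ++ v)) := by
  constructor
  · intro w1 w2 h1 h2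
    refine ⟨List.replicate w1.length false, by simp, ?_, ?_, ?_⟩
    · exact inLang_of_uniq _ (uniq_of_count _ (by simp [List.count_replicate]))
    · rw [ham_replicate]
      exact count_le_one_of_uniq _ (lang_uniq h1)
    · apply inLang_of_uniq
      apply uniq_of_count
      rw [List.count_append]
      have := count_le_one_of_uniq _ (lang_uniq h2)
      simp [List.count_replicate]
      omega
  · intro h
    obtain ⟨z, hz⟩ := h [true] [true]
      (inLang_of_uniq _ (uniq_of_count _ (by simp)))
      (inLang_of_uniq _ (uniq_of_count _ (by simp)))
    have hu := lang_uniq hz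
    have hlen : ([true] ++ z ++ [true]).length = z.length + 2 := by simp
    have h1 : ([true] ++ z ++ [true])[0]'(by omega) = true := by simp
    have h2 : ([true] ++ z ++ [true])[z.length + 1]'(by omega) = true := by
      simp [List.getElem_append_right]
    have := hu 0 (z.length + 1) (by omega) (by omega) h1 h2
    omega
end

section
/- Let X be a subshift and suppose G ⊆ L(X) is closed under concatenation (v, w ∈ G implies vw ∈ G) and satisfies gcd{|v| : v ∈ G} = 1. Then there exists M ∈ ℕ such that G contains a word of every length m ≥ M, and for n ≥ M + K + N (where K, N, Q come from a bound |G_j| ≥ Q·e^{j·h(X)} for some j ∈ [n−N, n] whenever n ≥ K), the number of n-periodic points of X satisfies |Per_n(X)| ≥ Q·e^{−(M+N)h(X)}·e^{n·h(X)}. -/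
open Real Filter MeasureTheory

/-- A set of naturals closed under addition whose only common divisor is `1`
contains every sufficiently large natural number. -/
lemma addclosed_gcd_one_cofinite (T : Set ℕ)
    (hadd : ∀ a ∈ T, ∀ b ∈ T, a + b ∈ T)
    (hg : ∀ d : ℕ, (∀ n ∈ T, d ∣ n) → d = 1) :
    ∃ M : ℕ, 1 ≤ M ∧ ∀ m : ℕ, M ≤ m → m ∈ T := by
  classical
  set T0 : ℕ → Prop := fun n => n = 0 ∨ n ∈ T with hT0def
  have hT0add : ∀ a b, T0 a → T0 b → T0 (a + b) := by
    rintro a b (rfl | ha) (rfl | hb)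
    · left; rfl
    · right; simpa using hb
    · right; simpa using ha
    · right; exact hadd a ha b hb
  have hsmul : ∀ k a, T0 a → T0 (k * a) := by
    intro k a ha
    induction k with
    | zero => left; simp
    | succ k ih => have := hT0add _ _ ih ha; simpa [Nat.succ_mul] using this
  -- a positive element of T
  have hpos : ∃ a ∈ T, 0 < a := by
    by_contra h
    push_neg at h
    have := hg 2 (fun n hn => by
      have : n = 0 := Nat.le_zero.mp (h n hn)
      simp [this])
    omega
  obtain ⟨a0, ha0T, ha0pos⟩ := hpos
  -- the minimal positive gcd of a finite list of elements of T
  set S : Set ℕ := {d | 0 < d ∧ ∃ l : List ℕ, (∀ x ∈ l, x ∈ T) ∧ l.foldr Nat.gcd 0 = d}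
    with hSdef
  have hSne : S.Nonempty := ⟨a0, ha0pos, [a0], by simpa using ha0T, by simp⟩
  set d := sInf S with hd
  obtain ⟨hdpos, l, hlT, hlg⟩ : d ∈ S := Nat.sInf_mem hSne
  -- d divides every element of T
  have hddvd : ∀ n ∈ T, d ∣ n := by
    intro n hn
    by_contra hnd
    have hmem : Nat.gcd n d ∈ S := by
      refine ⟨Nat.gcd_pos_of_pos_right n hdpos, n :: l, ?_, ?_⟩
      · intro x hx
        rcases List.mem_cons.mp hx with rfl | hx
        · exact hn
        · exact hlT x hx
      · simp [List.foldr, hlg]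
    have hlt : Nat.gcd n d < d := by
      rcases lt_or_eq_of_le (Nat.le_of_dvd hdpos (Nat.gcd_dvd_right n d)) with h | h
      · exact h
      · exact absurd (h ▸ Nat.gcd_dvd_left n d) hnd
    exact absurd (Nat.sInf_le hmem) (by omega)
  have hd1 : d = 1 := hg d hddvd
  -- Bezout along the list: the gcd is a difference of two elements of T0
  have bez : ∀ l' : List ℕ, (∀ x ∈ l', x ∈ T) →
      ∃ p q : ℕ, T0 p ∧ T0 q ∧ (p : ℤ) - q = ((l'.foldr Nat.gcd 0 : ℕ) : ℤ) := by
    intro l' hl'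
    induction l' with
    | nil => exact ⟨0, 0, Or.inl rfl, Or.inl rfl, by simp⟩
    | cons a tl ih =>
      obtain ⟨p', q', hp', hq', hpq'⟩ := ih (fun x hx => hl' x (List.mem_cons_of_mem a hx))
      have haT : T0 a := Or.inr (hl' a List.mem_cons_self)
      set g' := tl.foldr Nat.gcd 0 with hg'
      set u := Nat.gcdA a g' with hu
      set v := Nat.gcdB a g' with hv
      have hbez : (Nat.gcd a g' : ℤ) = a * u + g' * v := Nat.gcd_eq_gcd_ab a g'
      refine ⟨u.toNat * a + (v.toNat * p' + (-v).toNat * q'),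
              (-u).toNat * a + ((-v).toNat * p' + v.toNat * q'), ?_, ?_, ?_⟩
      · exact hT0add _ _ (hsmul _ _ haT) (hT0add _ _ (hsmul _ _ hp') (hsmul _ _ hq'))
      · exact hT0add _ _ (hsmul _ _ haT) (hT0add _ _ (hsmul _ _ hp') (hsmul _ _ hq'))
      · have hu' : (u.toNat : ℤ) - (-u).toNat = u := by omega
        have hv' : (v.toNat : ℤ) - (-v).toNat = v := by omega
        have hfold : (a :: tl).foldr Nat.gcd 0 = Nat.gcd a g' := by simp [hg']
        rw [hfold, hbez]
        push_cast
        linear_combination (a : ℤ) * hu' + ((p' : ℤ) - q') * hv' + v * hpq'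
  obtain ⟨p, q, hp, hq, hpq⟩ := bez l hlT
  rw [hlg, hd1] at hpq
  -- Produce consecutive elements a, a+1 ∈ T with a ≥ 1
  have hcons : ∃ a : ℕ, 1 ≤ a ∧ a ∈ T ∧ a + 1 ∈ T := by
    have hpq' : p = q + 1 := by omega
    rcases Nat.eq_zero_or_pos q with rfl | hq1
    · have h1 : (1 : ℕ) ∈ T := by
        rcases hp with h | h
        · omega
        · simpa [hpq'] using h
      exact ⟨1, le_refl 1, h1, hadd 1 h1 1 h1⟩
    · have hqT : q ∈ T := by
        rcases hq with h | h
        · omega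
        · exact h
      have hpT : p ∈ T := by
        rcases hp with h | h
        · omega
        · exact h
      exact ⟨q, hq1, hqT, by rw [← hpq']; exact hpT⟩
  obtain ⟨a, ha1, haT, haT1⟩ := hcons
  -- positive multiples stay in T
  have hposmul : ∀ k x, 0 < k → x ∈ T → k * x ∈ T := by
    intro k x hk hx
    induction k with
    | zero => omega
    | succ k ih =>
      rcases Nat.eq_zero_or_pos k with rfl | hk'
      · simpa using hx
      · have := hadd _ (ih hk') _ hx
        simpa [Nat.succ_mul] using this
  refine ⟨a * a, Nat.one_le_iff_ne_zero.mpr (by positivity), ?_⟩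
  intro m hm
  obtain ⟨s, r, hdm, hra⟩ : ∃ s r : ℕ, a * s + r = m - a * a ∧ r < a :=
    ⟨(m - a * a) / a, (m - a * a) % a, Nat.div_add_mod _ _, Nat.mod_lt _ (by omega)⟩
  have hmem1 : (a + s - r) * a ∈ T := hposmul _ _ (by omega) haT
  have hmem2 : T0 (r * (a + 1)) := hsmul _ _ (Or.inr haT1)
  have hmeq : m = (a + s - r) * a + r * (a + 1) := by
    have h1 : a + s - r + r = a + s := by omega
    have h2 : (a + s - r) * a + r * (a + 1) = (a + s - r + r) * a + r := by ring
    have h3 : (a + s) * a + r = a * a + (a * s + r) := by ring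
    rw [h2, h1, h3, hdm]
    omega
  rcases hmem2 with h0 | hmem2
  · rw [hmeq, h0, Nat.add_zero]; exact hmem1
  · rw [hmeq]; exact hadd _ hmem1 _ hmem2

/-- A point periodic with period `n` is determined by its values on `[0, n)`. -/
lemma per_eval {A : Type*} (n : ℕ) (hn : 0 < n) (x : ℤ → A)
    (hx : ∀ i : ℤ, x (i + (n : ℤ)) = x i) (i : ℤ) :
    x i = x ((i % (n : ℤ)).toNat) := by
  have key : ∀ k : ℤ, ∀ j : ℤ, x (j + k * n) = x j := by
    intro k
    induction k using Int.induction_on with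
    | zero => intro j; simp
    | succ k ih =>
      intro j
      have h1 : j + ((k : ℤ) + 1) * n = (j + k * n) + n := by ring
      rw [h1, hx, ih]
    | pred k ih =>
      intro j
      have h1 : j + (-(k : ℤ) - 1) * n + n = j + (-(k : ℤ)) * n := by ring
      have := hx (j + (-(k : ℤ) - 1) * n)
      rw [h1] at this
      rw [← this]
      exact ih j
  have hmod : i % (n : ℤ) + (i / n) * n = i := by
    have := Int.emod_add_mul_ediv i n
    linarith
  have h0 : (0 : ℤ) ≤ i % n := Int.emod_nonneg i (by exact_mod_cast hn.ne')
  have h2 : x i = x (i % n) := by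
    conv_lhs => rw [← hmod]
    exact key _ _
  rw [h2, Int.toNat_of_nonneg h0]

/-- If `G ⊆ L(X)` is closed under concatenation, every word of `G` begins a
periodic point of `X` of period its length, `gcd{|v| : v ∈ G} = 1`, and there are
`Q > 0`, `K, N` with: for all `n ≥ K` some `j ∈ [n-N, n]` has `|G_j| ≥ Q e^{j h(X)}`;
then there is `M` such that `G` contains words of every length `m ≥ M`, and for
all `n ≥ M + K + N` the number of `n`-periodic points of `X` is at least
`Q · e^{-(M+N) h(X)} · e^{n h(X)}`. -/
theorem stmt18 {A : Type*} [Fintype A] [DecidableEq A]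
    [TopologicalSpace A] [DiscreteTopology A]
    (X : Subshift A) (G : Set (List A))
    (hGL : ∀ w ∈ G, InLangS X.carrier w)
    (hconcat : ∀ v ∈ G, ∀ w ∈ G, (v ++ w) ∈ G)
    (hper : ∀ w ∈ G, ∃ x ∈ X.carrier,
      (∀ i : ℤ, x (i + (w.length : ℤ)) = x i) ∧ wordAt x 0 w.length = w)
    (hgcd : ∀ d : ℕ, (∀ v ∈ G, d ∣ v.length) → d = 1)
    (Q : ℝ) (hQ : 0 < Q) (K N : ℕ)
    (hbig : ∀ n : ℕ, K ≤ n → ∃ j : ℕ, n - N ≤ j ∧ j ≤ n ∧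
      Q * Real.exp ((j : ℝ) * langEntropy X.carrier) ≤
        ({w ∈ G | w.length = j}.ncard : ℝ)) :
    ∃ M : ℕ,
      (∀ m : ℕ, M ≤ m → ∃ v ∈ G, v.length = m) ∧
      ∀ n : ℕ, M + K + N ≤ n →
        Q * Real.exp (-((M + N : ℕ) : ℝ) * langEntropy X.carrier) *
            Real.exp ((n : ℝ) * langEntropy X.carrier) ≤
          ({x ∈ X.carrier | ∀ i : ℤ, x (i + (n : ℤ)) = x i}.ncard : ℝ) := by
  classical
  -- G is nonempty
  have hGne : ∃ v, v ∈ G := by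
    by_contra h
    push_neg at h
    have := hgcd 2 (fun v hv => absurd hv (h v))
    omega
  obtain ⟨v0, hv0⟩ := hGne
  obtain ⟨x0, hx0, -⟩ := hGL v0 hv0
  -- entropy is nonnegative
  have hwlen : ∀ (x : ℤ → A) (i : ℤ) (n : ℕ), (wordAt x i n).length = n := by
    intro x i n; simp [wordAt]
  have hent : 0 ≤ langEntropy X.carrier := by
    apply le_ciInf
    intro n
    apply div_nonneg _ (by positivity)
    apply Real.log_nonneg
    have hfin : {w : List A | w.length = (n : ℕ) ∧ InLangS X.carrier w}.Finite :=
      Set.Finite.subset (List.finite_length_eq A _) (fun w hw => hw.1)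
    have hne : {w : List A | w.length = (n : ℕ) ∧ InLangS X.carrier w}.Nonempty := by
      refine ⟨wordAt x0 0 n, hwlen x0 0 n, x0, hx0, 0, ?_⟩
      rw [hwlen]
    have := (Set.ncard_pos hfin).mpr hne
    exact_mod_cast this
  -- the lengths of G form an additively closed set with gcd 1
  set T : Set ℕ := {m | ∃ v ∈ G, v.length = m} with hT
  obtain ⟨M, hM1, hMall⟩ := addclosed_gcd_one_cofinite T
    (by
      rintro a ⟨v, hv, rfl⟩ b ⟨w, hw, rfl⟩
      exact ⟨v ++ w, hconcat v hv w hw, by simp⟩)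
    (by
      intro d hd
      exact hgcd d (fun v hv => hd v.length ⟨v, hv, rfl⟩))
  refine ⟨M, fun m hm => hMall m hm, ?_⟩
  intro n hn
  set h := langEntropy X.carrier with hh
  -- apply the density hypothesis at n - M
  obtain ⟨j, hj1, hj2, hjcard⟩ := hbig (n - M) (by omega)
  have hj1' : n - (M + N) ≤ j := by omega
  have hj2' : j ≤ n - M := hj2
  have hjn : j ≤ n := by omega
  -- a word of length n - j
  obtain ⟨u, huG, hulen⟩ := hMall (n - j) (by omega)
  -- G_j injects into G_n by appending u
  have hfinGn : {w ∈ G | w.length = n}.Finite :=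
    Set.Finite.subset (List.finite_length_eq A n) (fun w hw => hw.2)
  have step1 : ({w ∈ G | w.length = j}.ncard : ℕ) ≤ {w ∈ G | w.length = n}.ncard := by
    refine Set.ncard_le_ncard_of_injOn (fun w => w ++ u) ?_ ?_ hfinGn
    · rintro w ⟨hwG, hwl⟩
      refine ⟨hconcat w hwG u huG, ?_⟩
      simp only [List.length_append, hwl, hulen]
      omega
    · intro w _ w' _ hww
      exact List.append_cancel_right hww
  -- the periodic points
  set P : Set (ℤ → A) := {x ∈ X.carrier | ∀ i : ℤ, x (i + (n : ℤ)) = x i} with hP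
  have hnpos : 0 < n := by omega
  have hPfin : P.Finite := by
    apply Set.Finite.of_finite_image (f := fun x => (fun k : Fin n => x (k : ℕ)))
      (Set.Finite.subset (Set.finite_univ) (Set.subset_univ _))
    rintro x ⟨-, hx⟩ y ⟨-, hy⟩ hxy
    funext i
    rw [per_eval n hnpos x hx i, per_eval n hnpos y hy i]
    have hlt : (i % (n : ℤ)).toNat < n := by
      have := Int.emod_lt_of_pos i (by exact_mod_cast hnpos : (0 : ℤ) < n)
      have h0 : (0 : ℤ) ≤ i % n := Int.emod_nonneg i (by exact_mod_cast hnpos.ne')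
      omega
    exact congrFun hxy ⟨_, hlt⟩
  -- G_n injects into the periodic points
  have step2 : ({w ∈ G | w.length = n}.ncard : ℕ) ≤ P.ncard := by
    set f : List A → (ℤ → A) := fun w =>
      if hw : w ∈ G then (hper w hw).choose else x0 with hf
    have hfspec : ∀ w, w ∈ G →
        f w ∈ X.carrier ∧ (∀ i : ℤ, f w (i + (w.length : ℤ)) = f w i) ∧
          wordAt (f w) 0 w.length = w := by
      intro w hwG
      simp only [hf, dif_pos hwG]
      obtain ⟨x, hx, hrest⟩ := (hper w hwG).choose_spec
      exact ⟨x, hx, hrest⟩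
    refine Set.ncard_le_ncard_of_injOn f ?_ ?_ hPfin
    · rintro w ⟨hwG, hwn⟩
      obtain ⟨h1, h2, -⟩ := hfspec w hwG
      rw [hwn] at h2
      exact ⟨h1, h2⟩
    · rintro w ⟨hwG, hwn⟩ w' ⟨hwG', hwn'⟩ hww
      obtain ⟨-, -, h3⟩ := hfspec w hwG
      obtain ⟨-, -, h3'⟩ := hfspec w' hwG'
      rw [hwn] at h3
      rw [hwn'] at h3'
      rw [← h3, ← h3', hww]
  -- assemble the chain of inequalities
  have hMNn : M + N ≤ n := by omega
  have earg : -((M + N : ℕ) : ℝ) * h + (n : ℝ) * h = ((n - (M + N) : ℕ) : ℝ) * h := by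
    rw [Nat.cast_sub hMNn]
    push_cast
    ring
  have e1 : Q * Real.exp (-((M + N : ℕ) : ℝ) * h) * Real.exp ((n : ℝ) * h)
      = Q * Real.exp (((n - (M + N) : ℕ) : ℝ) * h) := by
    rw [mul_assoc, ← Real.exp_add, earg]
  rw [e1]
  calc Q * Real.exp (((n - (M + N) : ℕ) : ℝ) * h)
      ≤ Q * Real.exp ((j : ℝ) * h) := by
        apply mul_le_mul_of_nonneg_left _ hQ.le
        apply Real.exp_le_exp.mpr
        exact mul_le_mul_of_nonneg_right (by exact_mod_cast hj1') hent
    _ ≤ ({w ∈ G | w.length = j}.ncard : ℝ) := hjcard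
    _ ≤ ({w ∈ G | w.length = n}.ncard : ℝ) := by exact_mod_cast step1
    _ ≤ (P.ncard : ℝ) := by exact_mod_cast step2
end
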